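/- arXiv:1608.01490 — 10 statements merged into one kernel-verified Lean document; each statement's English description precedes it below -/
import Mathlib

section
/- Let A be an integral domain over a field K of characteristic zero and D a locally nilpotent K-derivation of A. Then the kernel of D is factorially closed in A: if a·b ∈ ker D with a, b nonzero, then a ∈ ker D and b ∈ ker D. -/
open Finset

lemma deriv_iter_leibniz {K A : Type*} [Field K] [CommRing A] [Algebra K A]
    (D : Derivation K A A) (p q : A) (n : ℕ) :
    (⇑D)^[n] (p * q) =
      ∑ k ∈ range n.succ, (n.choose k • ((⇑D)^[n - k] p * (⇑D)^[k] q)) := by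
  induction n with
  | zero => simp [Finset.range]
  | succ n IH =>
    calc
      (⇑D)^[n + 1] (p * q) =
          D (∑ k ∈ range n.succ,
              n.choose k • ((⇑D)^[n - k] p * (⇑D)^[k] q)) := by
        rw [Function.iterate_succ_apply', IH]
      _ = (∑ k ∈ range n.succ,
            n.choose k • ((⇑D)^[n - k + 1] p * (⇑D)^[k] q)) +
          ∑ k ∈ range n.succ,
            n.choose k • ((⇑D)^[n - k] p * (⇑D)^[k + 1] q) := by
        rw [map_sum]
        simp only [map_nsmul, Derivation.leibniz, smul_eq_mul, smul_add, sum_add_distrib,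
          Function.iterate_succ_apply']
        rw [add_comm]
        congr 1 <;> exact sum_congr rfl fun k hk => by rw [mul_comm]
      _ = (∑ k ∈ range n.succ,
                n.choose k.succ • ((⇑D)^[n - k] p * (⇑D)^[k + 1] q)) +
              1 • ((⇑D)^[n + 1] p * (⇑D)^[0] q) +
            ∑ k ∈ range n.succ, n.choose k • ((⇑D)^[n - k] p * (⇑D)^[k + 1] q) :=
        ?_
      _ = ((∑ k ∈ range n.succ, n.choose k • ((⇑D)^[n - k] p * (⇑D)^[k + 1] q)) +
              ∑ k ∈ range n.succ,
                n.choose k.succ • ((⇑D)^[n - k] p * (⇑D)^[k + 1] q)) +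
            1 • ((⇑D)^[n + 1] p * (⇑D)^[0] q) := by
        rw [add_comm, add_assoc]
      _ = (∑ i ∈ range n.succ,
              (n + 1).choose (i + 1) • ((⇑D)^[n + 1 - (i + 1)] p * (⇑D)^[i + 1] q)) +
            1 • ((⇑D)^[n + 1] p * (⇑D)^[0] q) := by
        simp_rw [Nat.choose_succ_succ, Nat.succ_sub_succ, add_smul, sum_add_distrib]
      _ = ∑ k ∈ range n.succ.succ,
            n.succ.choose k • ((⇑D)^[n.succ - k] p * (⇑D)^[k] q) := by
        rw [sum_range_succ' _ n.succ, Nat.choose_zero_right, tsub_zero]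
    congr
    refine (sum_range_succ' _ _).trans (congr_arg₂ (· + ·) ?_ ?_)
    · rw [sum_range_succ, Nat.choose_succ_self, zero_smul, add_zero]
      refine sum_congr rfl fun k hk => ?_
      rw [mem_range] at hk
      congr
      omega
    · rw [Nat.choose_zero_right, tsub_zero]

/-- The kernel of a locally nilpotent derivation of an integral domain over a field of
characteristic zero is factorially closed. -/
theorem kernel_factorially_closed
    (K : Type*) [Field K] [CharZero K]
    (A : Type*) [CommRing A] [IsDomain A] [Algebra K A]
    (D : Derivation K A A)
    (hD : ∀ a : A, ∃ n : ℕ, (fun x => D x)^[n] a = 0)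
    (a b : A) (ha : a ≠ 0) (hb : b ≠ 0) (hab : D (a * b) = 0) :
    D a = 0 ∧ D b = 0 := by
  classical
  haveI : CharZero A := charZero_of_injective_algebraMap (algebraMap K A).injective
  have hD' : ∀ x : A, ∃ n : ℕ, (⇑D)^[n] x = 0 := hD
  -- minimal vanishing indices
  set Fa := Nat.find (hD' a) with hFadef
  set Fb := Nat.find (hD' b) with hFbdef
  have hFa : (⇑D)^[Fa] a = 0 := Nat.find_spec (hD' a)
  have hFb : (⇑D)^[Fb] b = 0 := Nat.find_spec (hD' b)
  have hFa0 : Fa ≠ 0 := by intro h; rw [h] at hFa; exact ha hFa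
  have hFb0 : Fb ≠ 0 := by intro h; rw [h] at hFb; exact hb hFb
  set n := Fa - 1 with hn
  set m := Fb - 1 with hm
  have hna : (⇑D)^[n] a ≠ 0 := Nat.find_min (hD' a) (by omega)
  have hmb : (⇑D)^[m] b ≠ 0 := Nat.find_min (hD' b) (by omega)
  have hhigh : ∀ (x : A) (F k : ℕ), (⇑D)^[F] x = 0 → F ≤ k → (⇑D)^[k] x = 0 := by
    intro x F k hF hle
    have : k = (k - F) + F := by omega
    rw [this, Function.iterate_add_apply, hF]
    exact Function.iterate_fixed (map_zero D) _
  have hka : ∀ k, n < k → (⇑D)^[k] a = 0 := fun k hk => hhigh a Fa k hFa (by omega)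
  have hkb : ∀ k, m < k → (⇑D)^[k] b = 0 := fun k hk => hhigh b Fb k hFb (by omega)
  have hab' : ∀ k, 1 ≤ k → (⇑D)^[k] (a * b) = 0 := by
    intro k hk
    have : k = (k - 1) + 1 := by omega
    rw [this, Function.iterate_succ_apply]
    show (⇑D)^[k-1] (D (a*b)) = 0
    rw [hab]
    exact Function.iterate_fixed (map_zero D) _
  -- key computation
  have key : (⇑D)^[n + m] (a * b) =
      ((n + m).choose m) • ((⇑D)^[n] a * (⇑D)^[m] b) := by
    rw [deriv_iter_leibniz]
    rw [Finset.sum_eq_single m]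
    · rw [Nat.add_sub_cancel]
    · intro k hk hkm
      rw [Finset.mem_range] at hk
      rcases lt_or_gt_of_ne hkm with h | h
      · rw [hka (n + m - k) (by omega), zero_mul, smul_zero]
      · rw [hkb k h, mul_zero, smul_zero]
    · intro h
      exact absurd (Finset.mem_range.mpr (by omega)) h
  have hne : ((n + m).choose m) • ((⇑D)^[n] a * (⇑D)^[m] b) ≠ 0 := by
    rw [nsmul_eq_mul]
    exact mul_ne_zero (Nat.cast_ne_zero.mpr (Nat.choose_pos (Nat.le_add_left m n)).ne')
      (mul_ne_zero hna hmb)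
  have hnm : n + m = 0 := by
    by_contra h
    exact hne (key ▸ hab' (n + m) (by omega))
  have hn0 : n = 0 := by omega
  have hm0 : m = 0 := by omega
  constructor
  · have : Fa = 1 := by omega
    rw [this] at hFa; simpa using hFa
  · have : Fb = 1 := by omega
    rw [this] at hFb; simpa using hFb
end

section
/- Let A be an integral domain over a field K of characteristic zero and D a locally nilpotent K-derivation of A. If D(a) = a·b for some a, b ∈ A, then D(a) = 0. -/
open Finset

/-- Iterated Leibniz rule for derivations. -/
lemma lnd_iterate_leibniz {K A : Type*} [CommRing K] [CommRing A] [Algebra K A]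
    (D : Derivation K A A) (n : ℕ) (p q : A) :
    (fun x => D x)^[n] (p * q) =
      ∑ k ∈ range n.succ,
        (n.choose k • ((fun x => D x)^[n - k] p * (fun x => D x)^[k] q)) := by
  set F : A → A := fun x => D x with hF
  induction n with
  | zero => simp [Finset.range]
  | succ n IH =>
    calc
      F^[n + 1] (p * q) =
          F (∑ k ∈ range n.succ, n.choose k • (F^[n - k] p * F^[k] q)) := by
        rw [Function.iterate_succ_apply', IH]
      _ = (∑ k ∈ range n.succ, n.choose k • (F^[n - k + 1] p * F^[k] q)) +
          ∑ k ∈ range n.succ, n.choose k • (F^[n - k] p * F^[k + 1] q) := by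
        have hFadd : ∀ x y : A, F (x + y) = F x + F y := fun x y => map_add D x y
        have : F (∑ k ∈ range n.succ, n.choose k • (F^[n - k] p * F^[k] q)) =
            ∑ k ∈ range n.succ, F (n.choose k • (F^[n - k] p * F^[k] q)) :=
          map_sum D _ _
        rw [this, ← sum_add_distrib]
        refine sum_congr rfl fun k _ => ?_
        have h1 : F (n.choose k • (F^[n - k] p * F^[k] q)) =
            n.choose k • F (F^[n - k] p * F^[k] q) := by
          simpa [hF] using map_nsmul D (n.choose k) (F^[n - k] p * F^[k] q)
        have h2 : F (F^[n - k] p * F^[k] q) =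
            F^[n - k + 1] p * F^[k] q + F^[n - k] p * F^[k + 1] q := by
          have := D.leibniz (F^[n - k] p) (F^[k] q)
          simp only [smul_eq_mul] at this
          simp only [hF, Function.iterate_succ_apply', this]
          simp only [hF] at this
          linear_combination this
        rw [h1, h2, smul_add]
      _ = (∑ k ∈ range n.succ, n.choose k.succ • (F^[n - k] p * F^[k + 1] q)) +
              1 • (F^[n + 1] p * F^[0] q) +
            ∑ k ∈ range n.succ, n.choose k • (F^[n - k] p * F^[k + 1] q) := ?_
      _ = ((∑ k ∈ range n.succ, n.choose k • (F^[n - k] p * F^[k + 1] q)) +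
              ∑ k ∈ range n.succ, n.choose k.succ • (F^[n - k] p * F^[k + 1] q)) +
            1 • (F^[n + 1] p * F^[0] q) := by
        rw [add_comm, add_assoc]
      _ = (∑ i ∈ range n.succ,
              (n + 1).choose (i + 1) • (F^[n + 1 - (i + 1)] p * F^[i + 1] q)) +
            1 • (F^[n + 1] p * F^[0] q) := by
        simp_rw [Nat.choose_succ_succ, Nat.succ_sub_succ, add_smul, sum_add_distrib]
      _ = ∑ k ∈ range n.succ.succ, n.succ.choose k • (F^[n.succ - k] p * F^[k] q) := by
        rw [sum_range_succ' _ n.succ, Nat.choose_zero_right, tsub_zero]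
    congr
    refine (sum_range_succ' _ _).trans (congr_arg₂ (· + ·) ?_ ?_)
    · rw [sum_range_succ, Nat.choose_succ_self, zero_smul, add_zero]
      refine sum_congr rfl fun k hk => ?_
      rw [mem_range] at hk
      congr
      omega
    · rw [Nat.choose_zero_right, tsub_zero]

/-- If `D` is a locally nilpotent derivation of an integral domain `A` over a field of
characteristic zero and `D a = a * b`, then `D a = 0`. -/
theorem lnd_eigen_zero
    (K : Type*) [Field K] [CharZero K]
    (A : Type*) [CommRing A] [IsDomain A] [Algebra K A]
    (D : Derivation K A A)
    (hD : ∀ a : A, ∃ n : ℕ, (fun x => D x)^[n] a = 0)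
    (a b : A) (h : D a = a * b) :
    D a = 0 := by
  haveI : CharZero A :=
    charZero_of_injective_algebraMap (algebraMap K A).injective
  classical
  by_contra h0
  set F : A → A := fun x => D x with hF
  -- `F^[k] x = 0` is stable upwards
  have hstab : ∀ (x : A) (i j : ℕ), F^[i] x = 0 → i ≤ j → F^[j] x = 0 := by
    intro x i j hi hij
    obtain ⟨c, rfl⟩ := Nat.exists_eq_add_of_le hij
    rw [add_comm, Function.iterate_add_apply, hi]
    induction c with
    | zero => rfl
    | succ c ih =>
      rw [Function.iterate_succ_apply', ih (by omega)]
      exact map_zero D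
  have ha0 : a ≠ 0 := fun hx => h0 (by rw [hx, map_zero])
  have hb0 : b ≠ 0 := fun hx => h0 (by rw [h, hx, mul_zero])
  -- nilpotency indices
  have hDa1 : F^[1] a ≠ 0 := by simpa [hF] using h0
  set Na := Nat.find (hD a) with hNa
  set Nb := Nat.find (hD b) with hNb
  have hNa0 : F^[Na] a = 0 := Nat.find_spec (hD a)
  have hNb0 : F^[Nb] b = 0 := Nat.find_spec (hD b)
  have hNa2 : 2 ≤ Na := by
    by_contra hlt
    push_neg at hlt
    exact hDa1 (hstab a Na 1 hNa0 (by omega))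
  have hNb1 : 1 ≤ Nb := by
    by_contra hlt
    push_neg at hlt
    exact hb0 (by simpa using hstab b Nb 0 hNb0 (by omega))
  set m := Na - 1 with hm
  set n := Nb - 1 with hn
  have hma : F^[m] a ≠ 0 := Nat.find_min (hD a) (by omega)
  have hnb : F^[n] b ≠ 0 := Nat.find_min (hD b) (by omega)
  have hm1 : 1 ≤ m := by omega
  -- evaluate F^[m+n] (a*b) : only the k = n term survives
  have key : F^[m + n] (a * b) =
      (m + n).choose n • (F^[m] a * F^[n] b) := by
    rw [lnd_iterate_leibniz D (m + n) a b]
    rw [Finset.sum_eq_single n]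
    · have : m + n - n = m := by omega
      rw [this]
    · intro k hk hkn
      rw [mem_range] at hk
      rcases lt_or_gt_of_ne hkn with hlt | hgt
      · have : F^[m + n - k] a = 0 := hstab a Na _ hNa0 (by omega)
        rw [this, zero_mul, smul_zero]
      · have : F^[k] b = 0 := hstab b Nb _ hNb0 (by omega)
        rw [this, mul_zero, smul_zero]
    · intro hn'
      exact absurd (mem_range.mpr (by omega)) hn'
  -- but F^[m+n] (a*b) = F^[m+n+1] a = 0
  have hzero : F^[m + n] (a * b) = 0 := by
    have : F^[m + n] (a * b) = F^[m + n + 1] a := by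
      rw [Function.iterate_succ_apply]
      congr 1
      exact h.symm
    rw [this]
    exact hstab a Na _ hNa0 (by omega)
  rw [hzero] at key
  have hne : F^[m] a * F^[n] b ≠ 0 := mul_ne_zero hma hnb
  have hc : ((m + n).choose n : A) ≠ 0 := by
    exact_mod_cast Nat.cast_ne_zero.mpr (Nat.choose_pos (by omega : n ≤ m + n)).ne'
  apply hne
  have := key.symm
  rw [nsmul_eq_mul] at this
  exact (mul_eq_zero.mp this).resolve_left hc
end

section
/- A finite-dimensional Lie algebra L over an algebraically closed field of characteristic zero is nilpotent if and only if every two-dimensional Lie subalgebra of L is abelian. -/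
open Module Polynomial

/-- An endomorphism with a nonzero eigenvalue is not nilpotent. -/
lemma aux_not_nilpotent_of_eigen {K V : Type*} [Field K] [AddCommGroup V] [Module K V]
    (f : Module.End K V) {v : V} {μ : K} (hv : v ≠ 0) (hμ : μ ≠ 0) (h : f v = μ • v) :
    ¬ IsNilpotent f := by
  rintro ⟨n, hn⟩
  have key : ∀ m : ℕ, (f ^ m) v = μ ^ m • v := by
    intro m
    induction m with
    | zero => simp
    | succ m ih =>
        rw [pow_succ, Module.End.mul_apply, h, map_smul, ih, smul_smul, ← pow_succ']
  have h0 := key n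
  rw [hn, LinearMap.zero_apply] at h0
  rcases smul_eq_zero.mp h0.symm with h1 | h1
  · exact hμ (pow_eq_zero_iff'.mp h1).1
  · exact hv h1

/-- Over an algebraically closed field, a non-nilpotent endomorphism of a finite-dimensional
space has a nonzero eigenvalue. -/
lemma aux_exists_eigen {K V : Type*} [Field K] [IsAlgClosed K] [AddCommGroup V] [Module K V]
    [FiniteDimensional K V] {f : Module.End K V} (hf : ¬ IsNilpotent f) :
    ∃ (μ : K) (v : V), μ ≠ 0 ∧ v ≠ 0 ∧ f v = μ • v := by
  by_contra hcon
  push_neg at hcon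
  apply hf
  have hint : IsIntegral K f := LinearMap.isIntegral f
  set p := minpoly K f with hp
  have hmon : p.Monic := minpoly.monic hint
  have hsplits : p.Splits := IsAlgClosed.splits p
  -- every root of p is zero
  have hroots : ∀ a ∈ p.roots, a = 0 := by
    intro a ha
    have hroot : p.IsRoot a := (mem_roots hmon.ne_zero).mp ha
    have heig : f.HasEigenvalue a := Module.End.hasEigenvalue_iff_isRoot.mpr hroot
    obtain ⟨v, hv⟩ := heig.exists_hasEigenvector
    by_contra ha0
    exact hcon a v ha0 hv.2 hv.apply_eq_smul
  have hmap : p.roots.map (fun a => X - C a) = p.roots.map (fun _ => (X : K[X])) :=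
    Multiset.map_congr rfl (fun a ha => by rw [hroots a ha, C_0, sub_zero])
  have hXpow : p = X ^ Multiset.card p.roots := by
    conv_lhs => rw [hsplits.eq_prod_roots_of_monic hmon]
    rw [hmap, Multiset.map_const', Multiset.prod_replicate]
  refine ⟨Multiset.card p.roots, ?_⟩
  have := minpoly.aeval K f
  rw [← hp, hXpow] at this
  simpa using this

/-- A finite-dimensional Lie algebra over an algebraically closed field of characteristic zero
is nilpotent iff every two-dimensional Lie subalgebra is abelian. -/
theorem nilpotent_iff_two_dim_subalgebras_abelian
    (K : Type*) [Field K] [IsAlgClosed K] [CharZero K]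
    (L : Type*) [LieRing L] [LieAlgebra K L] [FiniteDimensional K L] :
    LieModule.IsNilpotent L L ↔
      ∀ M : LieSubalgebra K L, Module.finrank K M = 2 → IsLieAbelian M := by
  constructor
  · intro hL M hM
    constructor
    intro a b
    by_contra hab
    have ha0 : a ≠ 0 := fun h => hab (by rw [h, zero_lie])
    -- a and b are linearly independent in M
    have hli : LinearIndependent K ![a, b] := by
      rw [LinearIndependent.pair_iff]
      intro s t hst
      have ht : t = 0 := by
        by_contra ht
        have h4 : t • ⁅a, b⁆ = 0 := by
          rw [← lie_smul, eq_neg_of_add_eq_zero_right hst]; simp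
        exact hab ((smul_eq_zero.mp h4).resolve_left ht)
      subst ht
      rw [zero_smul, add_zero] at hst
      exact ⟨(smul_eq_zero.mp hst).resolve_right ha0, rfl⟩
    have hr : Set.range ![a, b] = {a, b} := by
      ext z
      simp [Matrix.range_cons, Matrix.range_empty, or_comm]
    have hspan : Submodule.span K {a, b} = ⊤ := by
      have := hli.span_eq_top_of_card_eq_finrank (by simpa using hM.symm)
      rwa [hr] at this
    obtain ⟨α, β, hc⟩ := Submodule.mem_span_pair.mp
      (hspan ▸ Submodule.mem_top : ⁅a, b⁆ ∈ Submodule.span K {a, b})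
    have hac : ⁅a, ⁅a, b⁆⁆ = β • ⁅a, b⁆ := by
      conv_lhs => rw [← hc]
      simp [lie_add, lie_smul]
    have hbc : ⁅b, ⁅a, b⁆⁆ = (-α) • ⁅a, b⁆ := by
      conv_lhs => rw [← hc]
      rw [lie_add, lie_smul, lie_smul, lie_self, smul_zero, add_zero,
        ← neg_neg ⁅b, a⁆, lie_skew, smul_neg, ← neg_smul]
    have hadnil : ∀ z : L, IsNilpotent (LieAlgebra.ad K L z) :=
      (LieAlgebra.isNilpotent_iff_forall (R := K) (L := L)).mp hL
    have hcL : ((⁅a, b⁆ : M) : L) ≠ 0 := fun h0 =>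
      hab (ZeroMemClass.coe_eq_zero.mp h0)
    rcases eq_or_ne β 0 with hβ | hβ
    · have hα : α ≠ 0 := by
        rintro rfl
        rw [hβ, zero_smul, zero_smul, add_zero] at hc
        exact hab hc.symm
      refine aux_not_nilpotent_of_eigen (LieAlgebra.ad K L (b : L)) hcL
        (neg_ne_zero.mpr hα) ?_ (hadnil b)
      have := congrArg (Subtype.val) hbc
      simpa [LieAlgebra.ad_apply] using this
    · refine aux_not_nilpotent_of_eigen (LieAlgebra.ad K L (a : L)) hcL hβ ?_ (hadnil a)
      have := congrArg (Subtype.val) hac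
      simpa [LieAlgebra.ad_apply] using this
  · intro h
    refine (LieAlgebra.isNilpotent_iff_forall (R := K) (L := L)).mpr ?_
    intro x
    by_contra hx
    obtain ⟨μ, y, hμ, hy, hxy⟩ := aux_exists_eigen hx
    have hxy' : ⁅x, y⁆ = μ • y := hxy
    have hx0 : x ≠ 0 := by
      rintro rfl
      exact hx ⟨1, by rw [pow_one]; ext z; simp⟩
    have hyx : ⁅y, x⁆ = (-μ) • y := by
      rw [← neg_neg ⁅y, x⁆, lie_skew, hxy', neg_smul]
    have hli : LinearIndependent K ![x, y] := by
      rw [LinearIndependent.pair_iff]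
      intro s t hst
      have h2 : ⁅x, s • x + t • y⁆ = 0 := by rw [hst, lie_zero]
      rw [lie_add, lie_smul, lie_smul, lie_self, smul_zero, zero_add, hxy',
        smul_smul] at h2
      have ht : t = 0 := by
        rcases smul_eq_zero.mp h2 with h3 | h3
        · exact (mul_eq_zero.mp h3).resolve_right hμ
        · exact absurd h3 hy
      refine ⟨?_, ht⟩
      rw [ht, zero_smul, add_zero] at hst
      exact (smul_eq_zero.mp hst).resolve_right hx0
    set p : Submodule K L := Submodule.span K {x, y} with hpdef
    have hxp : x ∈ p := Submodule.subset_span (by simp)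
    have hyp : y ∈ p := Submodule.subset_span (by simp)
    have hbr : ∀ a ∈ p, ∀ b ∈ p, ⁅a, b⁆ ∈ p := by
      intro a ha b hb
      obtain ⟨s, t, rfl⟩ := Submodule.mem_span_pair.mp ha
      obtain ⟨u, v, rfl⟩ := Submodule.mem_span_pair.mp hb
      have hexp : ⁅s • x + t • y, u • x + v • y⁆ = (s * v * μ - t * u * μ) • y := by
        simp only [add_lie, lie_add, smul_lie, lie_smul, lie_self, smul_zero, zero_add,
          add_zero, hxy', hyx, smul_smul]
        module
      rw [hexp]
      exact Submodule.smul_mem _ _ hyp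
    let M : LieSubalgebra K L :=
      { p with lie_mem' := fun {a b} ha hb => hbr a ha b hb }
    have hdim : Module.finrank K M = 2 := by
      have h1 := finrank_span_eq_card hli
      have hr : Set.range ![x, y] = {x, y} := by
        ext z
        simp [Matrix.range_cons, Matrix.range_empty, or_comm]
      rw [hr] at h1
      have h2 : Module.finrank K p = 2 := by simpa using h1
      exact h2
    have hab := h M hdim
    have hzero : ⁅(⟨x, hxp⟩ : M), (⟨y, hyp⟩ : M)⁆ = 0 := trivial_lie_zero _ _ _ _
    have hz := congrArg (Subtype.val) hzero
    simp only [LieSubalgebra.coe_bracket, ZeroMemClass.coe_zero] at hz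
    rw [hxy'] at hz
    exact hy ((smul_eq_zero.mp hz).resolve_left hμ)
end

section
/- Let A be an integral domain over an algebraically closed field K of characteristic zero, and let D₁, D₂ be nonzero K-derivations of A with [D₁, D₂] = D₂, where D₁ is locally nilpotent. Then ker D₁ ⊆ ker D₂. -/
/-- If `D₁, D₂` are nonzero derivations of an integral domain with `[D₁,D₂] = D₂` and `D₁`
locally nilpotent, then `ker D₁ ⊆ ker D₂`. -/
theorem ker_subset_ker_of_bracket_eq
    (K : Type*) [Field K] [IsAlgClosed K] [CharZero K]
    (A : Type*) [CommRing A] [IsDomain A] [Algebra K A]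
    (D₁ D₂ : Derivation K A A) (h₁ : D₁ ≠ 0) (h₂ : D₂ ≠ 0)
    (hbr : ⁅D₁, D₂⁆ = D₂)
    (hln : ∀ a : A, ∃ n : ℕ, (fun x => D₁ x)^[n] a = 0) :
    ∀ a : A, D₁ a = 0 → D₂ a = 0 := by
  intro a ha
  have hb : D₁ (D₂ a) = D₂ a := by
    have h := congrArg (fun D : Derivation K A A => D a) hbr
    simpa [Derivation.commutator_apply, ha] using h
  have hfix : ∀ n : ℕ, (fun x => D₁ x)^[n] (D₂ a) = D₂ a := by
    intro n
    induction n with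
    | zero => simp
    | succ n ih => rw [Function.iterate_succ_apply', ih]; exact hb
  obtain ⟨n, hn⟩ := hln (D₂ a)
  rw [hfix n] at hn
  exact hn
end

section
/- Let A be an integral domain over an algebraically closed field K of characteristic zero. Every finite-dimensional (over K) Lie subalgebra L of Der_K(A) consisting entirely of locally nilpotent derivations is a nilpotent Lie algebra. -/
open Polynomial

/-- An endomorphism of a finite-dimensional space over an algebraically closed field with no
nonzero eigenvalue is nilpotent. -/
lemma aux_isNilpotent_of_no_nonzero_eigenvalue
    {K V : Type*} [Field K] [IsAlgClosed K] [AddCommGroup V] [Module K V]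
    [FiniteDimensional K V] (f : Module.End K V)
    (h : ∀ μ : K, μ ≠ 0 → ∀ v : V, f v = μ • v → v = 0) : IsNilpotent f := by
  have hint : IsIntegral K f := Algebra.IsIntegral.isIntegral f
  have hmon : (minpoly K f).Monic := minpoly.monic hint
  have hsplit : (minpoly K f).Splits := IsAlgClosed.splits _
  have hroots : ∀ μ ∈ (minpoly K f).roots, μ = 0 := by
    intro μ hμ
    by_contra hμ0
    have hev : f.HasEigenvalue μ :=
      Module.End.hasEigenvalue_of_isRoot (isRoot_of_mem_roots hμ)
    obtain ⟨v, hv⟩ := hev.exists_hasEigenvector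
    exact hv.right (h μ hμ0 v hv.apply_eq_smul)
  have hp : minpoly K f = X ^ Multiset.card (minpoly K f).roots := by
    conv_lhs => rw [Polynomial.Splits.eq_prod_roots_of_monic hsplit hmon]
    rw [Multiset.map_congr rfl (fun x hx => by rw [hroots x hx, map_zero, sub_zero] :
      ∀ x ∈ (minpoly K f).roots, X - C x = X),
      Multiset.map_const', Multiset.prod_replicate]
  refine ⟨Multiset.card (minpoly K f).roots, ?_⟩
  have := minpoly.aeval K f
  rw [hp] at this
  simpa using this

/-- If `D` is a locally nilpotent derivation and `⁅D, E⁆ = μ • E` with `μ ≠ 0`, then `E = 0`. -/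
lemma aux_eigen_derivation_eq_zero
    {K A : Type*} [Field K] [CommRing A] [Algebra K A]
    (D E : Derivation K A A) (μ : K) (hμ : μ ≠ 0)
    (hbr : ⁅D, E⁆ = μ • E)
    (hD : ∀ a : A, ∃ n : ℕ, (fun x => D x)^[n] a = 0) : E = 0 := by
  by_contra hE
  obtain ⟨a₀, ha₀⟩ : ∃ a : A, E a ≠ 0 := by
    by_contra h
    push_neg at h
    exact hE (Derivation.ext h)
  have hex : ∃ n : ℕ, ∃ a : A, E a ≠ 0 ∧ (fun x => D x)^[n] a = 0 := by
    obtain ⟨n, hn⟩ := hD a₀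
    exact ⟨n, a₀, ha₀, hn⟩
  classical
  obtain ⟨a, haE, haD⟩ := Nat.find_spec hex
  have hN1 : Nat.find hex ≠ 0 := by
    intro h0
    rw [h0] at haD
    simp only [Function.iterate_zero, id_eq] at haD
    rw [haD] at haE
    exact haE (map_zero E)
  -- minimality: E (D a) = 0
  have hEDa : E (D a) = 0 := by
    by_contra hEDa
    have : Nat.find hex - 1 < Nat.find hex := Nat.sub_lt (Nat.pos_of_ne_zero hN1) one_pos
    refine Nat.find_min hex this ⟨D a, hEDa, ?_⟩
    have : (fun x => D x)^[Nat.find hex - 1] ((fun x => D x) a)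
        = (fun x => D x)^[Nat.find hex] a := by
      rw [← Function.iterate_succ_apply, Nat.succ_eq_add_one, Nat.sub_add_cancel
        (Nat.one_le_iff_ne_zero.mpr hN1)]
    simpa [this] using haD
  -- D (E a) = μ • E a
  have hkey : D (E a) = μ • E a := by
    have := congrArg (fun (F : Derivation K A A) => F a) hbr
    simp only [Derivation.commutator_apply, Derivation.smul_apply] at this
    rw [hEDa, sub_zero] at this
    exact this
  have hiter : ∀ n : ℕ, (fun x => D x)^[n] (E a) = μ ^ n • E a := by
    intro n
    induction n with
    | zero => simp
    | succ n ih =>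
      rw [Function.iterate_succ_apply', ih]
      rw [Derivation.map_smul, hkey, smul_smul, pow_succ, mul_comm]
  obtain ⟨n, hn⟩ := hD (E a)
  rw [hiter n] at hn
  rcases smul_eq_zero.mp hn with h | h
  · exact pow_ne_zero n hμ h
  · exact haE h

/-- Every finite-dimensional Lie subalgebra of `Der_K(A)` consisting of locally nilpotent
derivations of an integral domain `A` over an algebraically closed field of characteristic
zero is nilpotent. -/
theorem finiteDimensional_lnd_subalgebra_nilpotent
    (K : Type*) [Field K] [IsAlgClosed K] [CharZero K]
    (A : Type*) [CommRing A] [IsDomain A] [Algebra K A]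
    (L : LieSubalgebra K (Derivation K A A)) [FiniteDimensional K L]
    (hL : ∀ D ∈ L, ∀ a : A, ∃ n : ℕ, (fun x => D x)^[n] a = 0) :
    LieRing.IsNilpotent L := by
  rw [LieAlgebra.isNilpotent_iff_forall (R := K)]
  intro x
  apply aux_isNilpotent_of_no_nonzero_eigenvalue
  intro μ hμ v hv
  -- translate to derivations
  have hbr : ⁅(x : Derivation K A A), (v : Derivation K A A)⁆ = μ • (v : Derivation K A A) := by
    have : (⁅x, v⁆ : L) = μ • v := hv
    have := congrArg (fun z : L => (z : Derivation K A A)) this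
    simpa using this
  have hD := hL (x : Derivation K A A) x.2
  have hv0 : (v : Derivation K A A) = 0 :=
    aux_eigen_derivation_eq_zero _ _ μ hμ hbr hD
  exact Subtype.ext hv0
end

section
/- Let A be an integral domain over an algebraically closed field K of characteristic zero. If L is a locally finite-dimensional Lie subalgebra of Der_K(A) with every element of L locally nilpotent as a derivation, then L is a locally nilpotent Lie algebra (every finitely generated subalgebra of L is nilpotent). -/
open Polynomial

/-- If `D` is a locally nilpotent derivation and `⁅D, E⁆ = μ • E` with `μ ≠ 0`, then `E = 0`. -/
lemma key_eigen_zero {K A : Type*} [Field K] [CommRing A] [Algebra K A]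
    (D E : Derivation K A A) (μ : K) (hμ : μ ≠ 0)
    (hD : ∀ a : A, ∃ n : ℕ, (((D : A →ₗ[K] A)) ^ n) a = 0)
    (h : ⁅D, E⁆ = μ • E) : E = 0 := by
  set d : Module.End K A := (D : A →ₗ[K] A) with hd
  set e : Module.End K A := (E : A →ₗ[K] A) with he
  set d' : Module.End K A := d + μ • 1 with hd'
  have happ : ∀ a : A, D (E a) - E (D a) = μ • E a := by
    intro a
    have := congrArg (fun T : Derivation K A A => T a) h
    simpa [Derivation.commutator_apply] using this
  have hcomm : e * d' = d * e := by
    ext a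
    have h2 : E (D a) + μ • E a = D (E a) := by rw [← happ a]; abel
    simp only [hd', Module.End.mul_apply, LinearMap.add_apply, LinearMap.smul_apply,
      Module.End.one_apply, map_add, map_smul]
    exact h2
  have hpow : ∀ n : ℕ, e * d' ^ n = d ^ n * e := by
    intro n
    induction n with
    | zero => simp
    | succ n ih =>
      rw [pow_succ', ← mul_assoc, hcomm, mul_assoc, ih, ← mul_assoc, ← pow_succ']
  have hpoly : ∀ f : K[X], e * aeval d' f = aeval d f * e := by
    intro f
    induction f using Polynomial.induction_on' with
    | add p q hp hq => simp [map_add, add_mul, mul_add, hp, hq]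
    | monomial n c =>
      rw [aeval_monomial, aeval_monomial, ← mul_assoc, ← Algebra.commutes, mul_assoc, hpow,
        ← mul_assoc, Algebra.commutes, mul_assoc]
  ext a
  show E a = 0
  obtain ⟨m, hm⟩ := hD a
  obtain ⟨N, hN⟩ := hD (E a)
  have hcop1 : IsCoprime (X : K[X]) (X - C μ) := by
    refine ⟨C μ⁻¹, -C μ⁻¹, ?_⟩
    have : (C μ⁻¹) * X + (-C μ⁻¹) * (X - C μ) = C μ⁻¹ * C μ := by ring
    rw [this, ← C_mul, inv_mul_cancel₀ hμ, C_1]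
  obtain ⟨u, v, huv⟩ := (hcop1.pow (m := N) (n := m))
  have hXsub : aeval d' (X - C μ) = d := by
    simp [hd', Algebra.algebraMap_eq_smul_one]
  have ha : (aeval d' (u * X ^ N)) a = a := by
    have h1 := congrArg (fun p : K[X] => (aeval d' p) a) huv
    simp only [map_add, map_mul, map_pow, hXsub, aeval_one, LinearMap.add_apply,
      Module.End.mul_apply, Module.End.one_apply] at h1
    rw [hm, map_zero, add_zero] at h1
    simpa [map_mul, map_pow] using h1
  conv_lhs => rw [← ha]
  show e ((aeval d' (u * X ^ N)) a) = 0
  rw [← Module.End.mul_apply, hpoly, map_mul, aeval_X_pow, mul_assoc, Module.End.mul_apply,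
    Module.End.mul_apply]
  show (aeval d u) ((d ^ N) (E a)) = 0
  rw [hN, map_zero]

/-- Over an algebraically closed field, an endomorphism all of whose eigenvalues vanish is
nilpotent. -/
lemma nilpotent_of_eigenvalues_zero {K V : Type*} [Field K] [IsAlgClosed K] [AddCommGroup V]
    [Module K V] [FiniteDimensional K V] (f : Module.End K V)
    (h : ∀ μ : K, f.HasEigenvalue μ → μ = 0) : IsNilpotent f := by
  set p := minpoly K f with hp
  have hmon : p.Monic := minpoly.monic (LinearMap.isIntegral f)
  have hsp : p.Splits := IsAlgClosed.splits p
  have hfac : p = (p.roots.map fun a => X - C a).prod :=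
    hsp.eq_prod_roots_of_monic hmon
  have hroots : ∀ r ∈ p.roots, r = (0 : K) := fun r hr =>
    h r (Module.End.hasEigenvalue_of_isRoot (isRoot_of_mem_roots hr))
  have hXpow : p = X ^ p.roots.card := by
    have hmc : Multiset.map (fun a => X - C a) p.roots
        = Multiset.map (fun _ => (X : K[X])) p.roots :=
      Multiset.map_congr rfl (fun r hr => by rw [hroots r hr, C_0, sub_zero])
    conv_lhs => rw [hfac, hmc, Multiset.map_const', Multiset.prod_replicate]
  refine ⟨p.roots.card, ?_⟩
  have := minpoly.aeval K f
  rw [← hp, hXpow] at this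
  simpa using this

/-- A locally finite Lie subalgebra of `Der_K(A)` consisting of locally nilpotent derivations
is a locally nilpotent Lie algebra: every finitely generated subalgebra is nilpotent. -/
theorem locally_finite_lnd_subalgebra_locally_nilpotent
    (K : Type*) [Field K] [IsAlgClosed K] [CharZero K]
    (A : Type*) [CommRing A] [IsDomain A] [Algebra K A]
    (L : LieSubalgebra K (Derivation K A A))
    (hfin : ∀ s : Finset (Derivation K A A), (s : Set (Derivation K A A)) ⊆ L →
      FiniteDimensional K (LieSubalgebra.lieSpan K (Derivation K A A) (s : Set (Derivation K A A))))
    (hL : ∀ D ∈ L, ∀ a : A, ∃ n : ℕ, (fun x => D x)^[n] a = 0) :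
    ∀ s : Finset (Derivation K A A), (s : Set (Derivation K A A)) ⊆ L →
      LieRing.IsNilpotent
        (LieSubalgebra.lieSpan K (Derivation K A A) (s : Set (Derivation K A A))) := by
  intro s hs
  set M := LieSubalgebra.lieSpan K (Derivation K A A) (s : Set (Derivation K A A)) with hM
  haveI : FiniteDimensional K M := hfin s hs
  haveI : IsNoetherian K M := inferInstance
  rw [LieAlgebra.isNilpotent_iff_forall (R := K)]
  intro x
  apply nilpotent_of_eigenvalues_zero
  intro μ hμ
  by_contra hne
  obtain ⟨y, hy⟩ := hμ.exists_hasEigenvector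
  have hyy : ⁅x, y⁆ = μ • y := by
    have := hy.apply_eq_smul
    rwa [LieAlgebra.ad_apply] at this
  have hML : M ≤ L := LieSubalgebra.lieSpan_le.mpr hs
  have hx : (x : Derivation K A A) ∈ L := hML x.2
  have hbr : ⁅(x : Derivation K A A), (y : Derivation K A A)⁆ = μ • (y : Derivation K A A) := by
    rw [← LieSubalgebra.coe_bracket, hyy]; rfl
  have hDln : ∀ a : A, ∃ n : ℕ, ((((x : Derivation K A A) : A →ₗ[K] A)) ^ n) a = 0 := by
    intro a
    obtain ⟨n, hn⟩ := hL _ hx a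
    exact ⟨n, by rw [Module.End.pow_apply]; exact hn⟩
  have := key_eigen_zero (x : Derivation K A A) (y : Derivation K A A) μ hne hDln hbr
  exact hy.2 (by exact_mod_cast this)
end

section
/- Let L be a Lie subalgebra of Der_K(K[x,y]) all of whose elements are locally nilpotent derivations. Then L satisfies the Engel condition: for all D₁, D₂ ∈ L there exists k ≥ 1 with (ad D₂)^k(D₁) = 0. -/
open MvPolynomial

private lemma iterate_eq_zero_of_le {A : Type*} [Zero A] {f : A → A} (hf : f 0 = 0)
    {a : A} {n m : ℕ} (h : f^[n] a = 0) (hnm : n ≤ m) : f^[m] a = 0 := by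
  obtain ⟨t, rfl⟩ := Nat.exists_eq_add_of_le hnm
  rw [Nat.add_comm, Function.iterate_add_apply, h, Function.iterate_fixed hf]

set_option maxHeartbeats 1000000 in
/-- A Lie subalgebra of `Der_K(K[x,y])` consisting of locally nilpotent derivations satisfies
the Engel condition. -/
theorem lnd_subalgebra_engel
    (K : Type*) [Field K] [IsAlgClosed K] [CharZero K]
    (L : LieSubalgebra K (Derivation K (MvPolynomial (Fin 2) K) (MvPolynomial (Fin 2) K)))
    (hL : ∀ D ∈ L, ∀ a : MvPolynomial (Fin 2) K, ∃ n : ℕ, (fun x => D x)^[n] a = 0) :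
    ∀ D₁ ∈ L, ∀ D₂ ∈ L, ∃ k : ℕ, 1 ≤ k ∧ (fun D => ⁅D, D₂⁆)^[k] D₁ = 0 := by
  classical
  intro D₁ _hD₁ D₂ hD₂
  letI hdn : HasDistribNeg (Module.End K (Module.End K (MvPolynomial (Fin 2) K))) :=
    @NonUnitalNonAssocRing.toHasDistribNeg (Module.End K (Module.End K (MvPolynomial (Fin 2) K))) _
  -- local nilpotency of D₂, with choice of bounds
  obtain ⟨n, hn⟩ := Classical.axiomOfChoice (hL D₂ hD₂)
  set u : Module.End K (MvPolynomial (Fin 2) K) := (D₂ : Module.End K (MvPolynomial (Fin 2) K))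
    with hu
  set e : Module.End K (MvPolynomial (Fin 2) K) := (D₁ : Module.End K (MvPolynomial (Fin 2) K))
    with he
  have hufun : (⇑u : MvPolynomial (Fin 2) K → MvPolynomial (Fin 2) K) = fun x => D₂ x := rfl
  have hu0 : ∀ {m : ℕ} {a : MvPolynomial (Fin 2) K}, n a ≤ m → (⇑u)^[m] a = 0 := by
    intro m a hm
    exact iterate_eq_zero_of_le (by simp [hufun]) (by rw [hufun]; exact hn a) hm
  set R1 : Module.End K (Module.End K (MvPolynomial (Fin 2) K)) := LinearMap.mulRight K u
    with hR1
  set L1 : Module.End K (Module.End K (MvPolynomial (Fin 2) K)) := LinearMap.mulLeft K u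
    with hL1
  -- the iterated bracket as a power of an endomorphism of the endomorphism algebra
  have coe_iter : ∀ k : ℕ,
      (((fun D => ⁅D, D₂⁆)^[k] D₁ :
          Derivation K (MvPolynomial (Fin 2) K) (MvPolynomial (Fin 2) K)) :
            Module.End K (MvPolynomial (Fin 2) K))
        = ((R1 - L1) ^ k) e := by
    intro k
    induction k with
    | zero => simp [he]
    | succ k ih =>
      rw [Function.iterate_succ_apply', pow_succ', Module.End.mul_apply, ← ih,
        Derivation.commutator_coe_linear_map, Ring.lie_def, LinearMap.sub_apply, hR1, hL1,
        LinearMap.mulRight_apply, LinearMap.mulLeft_apply]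
  -- the big bound
  set N : ℕ := (Finset.univ : Finset (Fin 2)).sup
      (fun i => n (X i) + ((Finset.range (n (X i))).sup
        (fun m => n (e ((⇑u)^[m] (X i)))))) with hN
  refine ⟨N + 1, Nat.le_add_left 1 N, ?_⟩
  -- a derivation vanishing on all variables is zero
  have hvars : ∀ i : Fin 2,
      ((fun D => ⁅D, D₂⁆)^[N + 1] D₁) (X i)
        = (0 : Derivation K (MvPolynomial (Fin 2) K) (MvPolynomial (Fin 2) K)) (X i) := by
    intro i
    have hNi : n (X i) + ((Finset.range (n (X i))).sup
        (fun m => n (e ((⇑u)^[m] (X i))))) ≤ N := by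
      rw [hN]
      exact Finset.le_sup (f := fun i : Fin 2 => n (X i) + ((Finset.range (n (X i))).sup
        (fun m => n (e ((⇑u)^[m] (X i)))))) (Finset.mem_univ i)
    have happly : ((fun D => ⁅D, D₂⁆)^[N + 1] D₁) (X i)
        = (((R1 - L1) ^ (N + 1)) e) (X i) := by
      rw [← coe_iter (N + 1)]; rfl
    rw [happly]
    have hcomm0 : Commute R1 L1 := by
      rw [hR1, hL1]
      exact (LinearMap.commute_mulLeft_right (R := K) u u).symm
    have hcomm : Commute R1 (-L1) := hcomm0.neg_right
    rw [show R1 - L1 = R1 + -L1 from sub_eq_add_neg R1 L1]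
    rw [hcomm.add_pow, LinearMap.sum_apply, LinearMap.sum_apply, Derivation.zero_apply]
    refine Finset.sum_eq_zero ?_
    intro m _hm
    -- the key vanishing of the inner composition
    have key : (⇑u)^[N + 1 - m] (e ((⇑u)^[m] (X i))) = 0 := by
      by_cases hc : n (X i) ≤ m
      · rw [hu0 hc, map_zero]
        exact Function.iterate_fixed (by simp [hufun]) _
      · push_neg at hc
        apply hu0
        have h1 : n (e ((⇑u)^[m] (X i)))
            ≤ (Finset.range (n (X i))).sup (fun m => n (e ((⇑u)^[m] (X i)))) :=
          Finset.le_sup (f := fun m => n (e ((⇑u)^[m] (X i)))) (Finset.mem_range.2 hc)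
        omega
    -- expand the summand and use `key`
    rcases Nat.even_or_odd (N + 1 - m) with hpar | hpar
    · rw [Module.End.mul_apply, Module.End.mul_apply, Module.End.natCast_apply, hpar.neg_pow,
        hR1, hL1, LinearMap.pow_mulLeft, LinearMap.pow_mulRight, LinearMap.mulLeft_apply,
        LinearMap.mulRight_apply]
      simp only [Module.End.mul_apply, LinearMap.smul_apply, Module.End.pow_apply, map_smul]
      rw [← Module.End.pow_apply, map_nsmul, Module.End.pow_apply, key, smul_zero]
    · rw [Module.End.mul_apply, Module.End.mul_apply, Module.End.natCast_apply, hpar.neg_pow,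
        hR1, hL1, LinearMap.pow_mulLeft]
      simp only [LinearMap.neg_apply, LinearMap.mulLeft_apply, map_neg, LinearMap.mulRight_apply,
        Module.End.mul_apply, LinearMap.smul_apply, Module.End.pow_apply, map_smul,
        LinearMap.pow_mulRight, LinearMap.neg_apply]
      rw [← Module.End.pow_apply, map_nsmul, Module.End.pow_apply, key, smul_zero]
      simp
  exact MvPolynomial.derivation_ext hvars
end

section
/- Let D₁, D₂ be locally nilpotent derivations of K[x,y] that are linearly independent over K[x,y] and commute: [D₁, D₂] = 0. Then there exists a coordinate pair (a, c) in K[x,y] with D₁ = D_a and D₂ = D_c. -/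
open MvPolynomial

/-- The Jacobian derivation `D_h : p ↦ det J(h,p)` of `K[x,y]`. -/
noncomputable def jacDer {K : Type*} [CommRing K] (h : MvPolynomial (Fin 2) K) :
    Derivation K (MvPolynomial (Fin 2) K) (MvPolynomial (Fin 2) K) :=
  (pderiv 0 h) • (pderiv 1) - (pderiv 1 h) • (pderiv 0)

section AuxLemmas

open Finset

set_option linter.unusedSectionVars false

lemma iterLeibniz {K B : Type*} [CommRing K] [CommRing B] [Algebra K B]
    (D : Derivation K B B) (n : ℕ) (p q : B) :
    (fun x => D x)^[n] (p * q) =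
      ∑ k ∈ range (n + 1),
        n.choose k • ((fun x => D x)^[n - k] p * (fun x => D x)^[k] q) := by
  set d : B → B := fun x => D x with hd
  have d_mul : ∀ a b : B, d (a * b) = d a * b + a * d b := by
    intro a b; simp [hd, D.leibniz, smul_eq_mul]; ring
  have d_sum : ∀ (s : Finset ℕ) (F : ℕ → B), d (∑ k ∈ s, F k) = ∑ k ∈ s, d (F k) := by
    intro s F; simp [hd, map_sum]
  have d_smul : ∀ (m : ℕ) (a : B), d (m • a) = m • d a := by
    intro m a; simp [hd]
  induction n with
  | zero => simp
  | succ n IH =>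
    calc
      d^[n + 1] (p * q) =
          d (∑ k ∈ range n.succ, n.choose k • (d^[n - k] p * d^[k] q)) := by
        rw [Function.iterate_succ_apply', IH]
      _ = (∑ k ∈ range n.succ, n.choose k • (d^[n - k + 1] p * d^[k] q)) +
          ∑ k ∈ range n.succ, n.choose k • (d^[n - k] p * d^[k + 1] q) := by
        rw [d_sum]
        simp_rw [d_smul, d_mul, Function.iterate_succ_apply', smul_add, sum_add_distrib]
      _ = (∑ k ∈ range n.succ, n.choose k.succ • (d^[n - k] p * d^[k + 1] q)) +
            1 • (d^[n + 1] p * d^[0] q) +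
          ∑ k ∈ range n.succ, n.choose k • (d^[n - k] p * d^[k + 1] q) := ?_
      _ = ((∑ k ∈ range n.succ, n.choose k • (d^[n - k] p * d^[k + 1] q)) +
            ∑ k ∈ range n.succ, n.choose k.succ • (d^[n - k] p * d^[k + 1] q)) +
            1 • (d^[n + 1] p * d^[0] q) := by
        rw [add_comm, add_assoc]
      _ = (∑ i ∈ range n.succ,
              (n + 1).choose (i + 1) • (d^[n + 1 - (i + 1)] p * d^[i + 1] q)) +
            1 • (d^[n + 1] p * d^[0] q) := by
        simp_rw [Nat.choose_succ_succ, Nat.succ_sub_succ, add_smul, sum_add_distrib]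
      _ = ∑ k ∈ range n.succ.succ, n.succ.choose k • (d^[n.succ - k] p * d^[k] q) := by
        rw [sum_range_succ' _ n.succ, Nat.choose_zero_right, tsub_zero]
    congr
    refine (sum_range_succ' _ _).trans (congr_arg₂ (· + ·) ?_ ?_)
    · rw [sum_range_succ, Nat.choose_succ_self, zero_smul, add_zero]
      refine sum_congr rfl fun k hk => ?_
      rw [mem_range] at hk
      congr
      omega
    · rw [Nat.choose_zero_right, tsub_zero]

lemma iterate_zero_of_le {K B : Type*} [CommRing K] [CommRing B] [Algebra K B]
    (D : Derivation K B B) {x : B} {n : ℕ} (h : (fun y => D y)^[n] x = 0)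
    {m : ℕ} (hm : n ≤ m) : (fun y => D y)^[m] x = 0 := by
  obtain ⟨k, rfl⟩ := Nat.exists_eq_add_of_le hm
  rw [add_comm, Function.iterate_add_apply, h]
  exact Function.iterate_fixed (by simp) k

lemma exists_top {K B : Type*} [CommRing K] [CommRing B] [Algebra K B]
    (D : Derivation K B B) (hln : ∀ x : B, ∃ n : ℕ, (fun y => D y)^[n] x = 0)
    (x : B) (hx : x ≠ 0) :
    ∃ b : ℕ, (fun y => D y)^[b] x ≠ 0 ∧ ∀ m, b + 1 ≤ m → (fun y => D y)^[m] x = 0 := by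
  classical
  have h := hln x
  set n := Nat.find h with hn
  have hspec : (fun y => D y)^[n] x = 0 := Nat.find_spec h
  have hnpos : n ≠ 0 := by
    intro h0
    rw [h0] at hspec
    simp at hspec
    exact hx hspec
  refine ⟨n - 1, ?_, ?_⟩
  · exact Nat.find_min h (by omega)
  · intro m hm
    exact iterate_zero_of_le D hspec (by omega)

lemma w_eq_zero {K B : Type*} [CommRing K] [CommRing B] [IsDomain B] [CharZero B] [Algebra K B]
    (D : Derivation K B B) (hln : ∀ x : B, ∃ n : ℕ, (fun y => D y)^[n] x = 0)
    {w Δ : B} (hΔ : Δ ≠ 0) (h : D Δ = w * Δ) : w = 0 := by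
  classical
  by_contra hw
  have hDΔ : D Δ ≠ 0 := by
    rw [h]
    exact mul_ne_zero hw hΔ
  obtain ⟨a, haw, hawm⟩ := exists_top D hln w hw
  obtain ⟨b, hbΔ, hbm⟩ := exists_top D hln Δ hΔ
  have hb1 : 1 ≤ b := by
    by_contra hb
    have : b = 0 := by omega
    exact hDΔ (by simpa using hbm 1 (by omega))
  -- D^[a+b] (w * Δ) = choose • (D^[a] w * D^[b] Δ) ≠ 0
  have hsum : (fun y => D y)^[a + b] (w * Δ) =
      (a + b).choose b • ((fun y => D y)^[a] w * (fun y => D y)^[b] Δ) := by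
    rw [iterLeibniz]
    rw [Finset.sum_eq_single_of_mem b (by simp [Finset.mem_range])]
    · rw [Nat.add_sub_cancel]
    · intro k hk hkb
      rcases lt_or_gt_of_ne hkb with hlt | hgt
      · have : (fun y => D y)^[a + b - k] w = 0 := hawm _ (by omega)
        rw [this, zero_mul, smul_zero]
      · have : (fun y => D y)^[k] Δ = 0 := hbm _ (by omega)
        rw [this, mul_zero, smul_zero]
  have hne : (fun y => D y)^[a + b] (w * Δ) ≠ 0 := by
    rw [hsum]
    have hch : (((a + b).choose b : ℕ) : B) ≠ 0 :=
      Nat.cast_ne_zero.mpr (Nat.choose_pos (by omega)).ne'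
    rw [nsmul_eq_mul]
    exact mul_ne_zero hch (mul_ne_zero haw hbΔ)
  have hzero : (fun y => D y)^[a + b] (w * Δ) = 0 := by
    rw [← h, ← Function.iterate_succ_apply]
    exact hbm _ (by omega)
  exact hne hzero


section FieldAux

variable {K : Type*} [Field K] [CharZero K]

lemma derivation_aeval2 {B : Type*} [CommRing B] [Algebra K B]
    (D : Derivation K B B) (g : Fin 2 → B) (P : MvPolynomial (Fin 2) K) :
    D (aeval g P) = aeval g (pderiv 0 P) * D (g 0) + aeval g (pderiv 1 P) * D (g 1) := by
  induction P using MvPolynomial.induction_on with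
  | C a => simp
  | add p q hp hq => simp only [map_add, hp, hq]; ring
  | mul_X p i hp =>
    rw [map_mul, aeval_X, D.leibniz, smul_eq_mul, smul_eq_mul, hp]
    fin_cases i <;>
      simp [pderiv_mul, pderiv_X_self, pderiv_X_of_ne, map_mul, map_add] <;> ring

lemma derivation_apply (D : Derivation K (MvPolynomial (Fin 2) K) (MvPolynomial (Fin 2) K))
    (p : MvPolynomial (Fin 2) K) :
    D p = pderiv 0 p * D (X 0) + pderiv 1 p * D (X 1) := by
  have := derivation_aeval2 D X p
  simpa [aeval_X_left_apply] using this

lemma fs_add_apply (m : Fin 2 →₀ ℕ) (i j : Fin 2) :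
    (m + Finsupp.single i 1 : Fin 2 →₀ ℕ) j = m j + Finsupp.single i 1 j :=
  Finsupp.add_apply m _ j

lemma fs_add_sub (m : Fin 2 →₀ ℕ) (i : Fin 2) :
    m + Finsupp.single i 1 - Finsupp.single i 1 = m := by
  ext j
  rw [Finsupp.tsub_apply, Finsupp.add_apply]
  omega

lemma fs_sub_add {m : Fin 2 →₀ ℕ} {i : Fin 2} (h : m i ≠ 0) :
    m - Finsupp.single i 1 + Finsupp.single i 1 = m := by
  ext j
  rw [Finsupp.add_apply, Finsupp.tsub_apply, Finsupp.single_apply]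
  by_cases hj : i = j
  · subst hj
    simp only [if_pos rfl, if_true]
    omega
  · simp [hj]

lemma coeff_pderiv' (i : Fin 2) (m : Fin 2 →₀ ℕ) (p : MvPolynomial (Fin 2) K) :
    coeff m (pderiv i p) = (m i + 1 : ℕ) * coeff (m + Finsupp.single i 1) p := by
  induction p using MvPolynomial.induction_on' with
  | monomial s a =>
    rw [pderiv_monomial, coeff_monomial, coeff_monomial]
    by_cases h : s = m + Finsupp.single i 1
    · subst h
      rw [if_pos (fs_add_sub m i), if_pos rfl, fs_add_apply, Finsupp.single_eq_same]
      push_cast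
      ring
    · rw [if_neg h]
      by_cases h2 : s - Finsupp.single i 1 = m
      · have hsi : s i = 0 := by
          by_contra hsi
          exact h (by rw [← h2, fs_sub_add hsi])
        rw [if_pos h2, hsi]
        simp
      · rw [if_neg h2, mul_zero]
  | add p q hp hq =>
    simp only [map_add, coeff_add, hp, hq]
    ring

lemma pderiv_comm' (i j : Fin 2) (p : MvPolynomial (Fin 2) K) :
    pderiv i (pderiv j p) = pderiv j (pderiv i p) := by
  apply MvPolynomial.ext
  intro m
  by_cases hij : i = j
  · subst hij
    rfl
  · rw [coeff_pderiv', coeff_pderiv', coeff_pderiv', coeff_pderiv']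
    rw [fs_add_apply m i j, fs_add_apply m j i]
    have hsw : m + Finsupp.single i 1 + Finsupp.single j 1 =
        m + Finsupp.single j 1 + Finsupp.single i 1 := add_right_comm _ _ _
    rw [hsw, Finsupp.single_eq_of_ne hij, Finsupp.single_eq_of_ne (Ne.symm hij)]
    push_cast
    ring

lemma eq_C_of_pderiv_eq_zero {p : MvPolynomial (Fin 2) K}
    (h0 : pderiv 0 p = 0) (h1 : pderiv 1 p = 0) : p = C (coeff 0 p) := by
  apply MvPolynomial.ext
  intro m
  rw [coeff_C]
  by_cases hm : (0 : Fin 2 →₀ ℕ) = m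
  · rw [if_pos hm, hm]
  · rw [if_neg hm]
    have : ∃ i : Fin 2, m i ≠ 0 := by
      by_contra hc
      push_neg at hc
      exact hm (Finsupp.ext fun j => by simp [hc j]).symm
    obtain ⟨i, hi⟩ := this
    have hkey := coeff_pderiv' i (m - Finsupp.single i 1) p
    rw [fs_sub_add hi] at hkey
    have hz : pderiv i p = 0 := by fin_cases i <;> assumption
    rw [hz, coeff_zero] at hkey
    have hne : ((((m - Finsupp.single i 1 : Fin 2 →₀ ℕ) i : ℕ) + 1 : ℕ) : K) ≠ 0 :=
      Nat.cast_ne_zero.mpr (Nat.succ_ne_zero _)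
    exact (mul_eq_zero.mp hkey.symm).resolve_left hne

lemma exists_antideriv_poly (φ : Polynomial K) :
    ∃ ψ : Polynomial K, Polynomial.derivative ψ = φ := by
  induction φ using Polynomial.induction_on' with
  | add p q hp hq =>
    obtain ⟨ψp, hψp⟩ := hp
    obtain ⟨ψq, hψq⟩ := hq
    exact ⟨ψp + ψq, by rw [map_add, hψp, hψq]⟩
  | monomial n a =>
    refine ⟨Polynomial.C (a / (n + 1)) * Polynomial.X ^ (n + 1), ?_⟩
    rw [Polynomial.derivative_C_mul, Polynomial.derivative_X_pow, ← mul_assoc, ← map_mul,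
      Nat.add_sub_cancel]
    have hne : ((n : K) + 1) ≠ 0 := by
      have : ((n : K) + 1) = ((n + 1 : ℕ) : K) := by push_cast; ring
      rw [this]
      exact Nat.cast_ne_zero.mpr (Nat.succ_ne_zero _)
    have hval : a / ((n : K) + 1) * ((n + 1 : ℕ) : K) = a := by
      push_cast
      field_simp
    rw [hval, Polynomial.C_mul_X_pow_eq_monomial]

lemma exists_pderiv_eq (i : Fin 2) (p : MvPolynomial (Fin 2) K) :
    ∃ q : MvPolynomial (Fin 2) K, pderiv i q = p := by
  refine ⟨∑ m ∈ p.support, monomial (m + Finsupp.single i 1) (coeff m p / ((m i : K) + 1)), ?_⟩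
  rw [map_sum]
  have : ∀ m ∈ p.support,
      pderiv i (monomial (m + Finsupp.single i 1) (coeff m p / ((m i : K) + 1)))
        = monomial m (coeff m p) := by
    intro m _
    rw [pderiv_monomial, fs_add_sub, fs_add_apply, Finsupp.single_eq_same]
    congr 1
    have hne : ((m i : K) + 1) ≠ 0 := by
      have : ((m i : K) + 1) = ((m i + 1 : ℕ) : K) := by push_cast; ring
      rw [this]
      exact Nat.cast_ne_zero.mpr (Nat.succ_ne_zero _)
    push_cast
    field_simp
  rw [Finset.sum_congr rfl this, support_sum_monomial_coeff]

lemma mem_range_of_pderiv0_eq_zero {r : MvPolynomial (Fin 2) K} (h : pderiv 0 r = 0) :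
    ∃ φ : Polynomial K, r = Polynomial.aeval (X 1 : MvPolynomial (Fin 2) K) φ := by
  have hmem : r ∈ (Polynomial.aeval (R := K) (X 1 : MvPolynomial (Fin 2) K)).range := by
    rw [← support_sum_monomial_coeff r]
    apply Subalgebra.sum_mem
    intro m hm
    have hm0 : m 0 = 0 := by
      by_contra hm0
      have hkey := coeff_pderiv' 0 (m - Finsupp.single 0 1) r
      rw [fs_sub_add hm0, h, coeff_zero] at hkey
      have hne : ((((m - Finsupp.single 0 1 : Fin 2 →₀ ℕ) 0 : ℕ) + 1 : ℕ) : K) ≠ 0 :=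
        Nat.cast_ne_zero.mpr (Nat.succ_ne_zero _)
      exact (mem_support_iff.mp hm) ((mul_eq_zero.mp hkey.symm).resolve_left hne)
    have hms : m = Finsupp.single 1 (m 1) := by
      ext j
      fin_cases j
      · simpa [Finsupp.single_apply] using hm0
      · simp [Finsupp.single_apply]
    refine ⟨Polynomial.C (coeff m r) * Polynomial.X ^ (m 1), ?_⟩
    have haev : (Polynomial.aeval (R := K) (X 1 : MvPolynomial (Fin 2) K))
        (Polynomial.C (coeff m r) * Polynomial.X ^ (m 1))
          = C (coeff m r) * (X 1) ^ (m 1) := by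
      simp [algebraMap_eq]
    show Polynomial.aeval (R := K) (X 1 : MvPolynomial (Fin 2) K)
        (Polynomial.C (coeff m r) * Polynomial.X ^ (m 1)) = monomial m (coeff m r)
    rw [haev, X_pow_eq_monomial, C_mul_monomial, mul_one, ← hms]
  obtain ⟨φ, hφ⟩ := hmem
  exact ⟨φ, hφ.symm⟩

lemma exists_potential {f g : MvPolynomial (Fin 2) K}
    (h : pderiv 0 f + pderiv 1 g = 0) :
    ∃ a : MvPolynomial (Fin 2) K, pderiv 0 a = g ∧ pderiv 1 a = -f := by
  obtain ⟨a₁, ha₁⟩ := exists_pderiv_eq 0 g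
  set r : MvPolynomial (Fin 2) K := -f - pderiv 1 a₁ with hr
  have hr0 : pderiv 0 r = 0 := by
    rw [hr, map_sub, map_neg, pderiv_comm' 0 1, ha₁]
    have : pderiv 1 g = -pderiv 0 f := by
      rw [eq_neg_iff_add_eq_zero, add_comm]
      exact h
    rw [this]
    ring
  obtain ⟨φ, hφ⟩ := mem_range_of_pderiv0_eq_zero hr0
  obtain ⟨ψ, hψ⟩ := exists_antideriv_poly φ
  refine ⟨a₁ + Polynomial.aeval (X 1 : MvPolynomial (Fin 2) K) ψ, ?_, ?_⟩
  · rw [map_add, ha₁, Derivation.map_aeval, hψ, ← hφ]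
    have : pderiv 0 (X 1 : MvPolynomial (Fin 2) K) = 0 :=
      pderiv_X_of_ne (by decide)
    rw [this, smul_zero, add_zero]
  · rw [map_add, Derivation.map_aeval, hψ, ← hφ, pderiv_X_self, smul_eq_mul, mul_one]
    rw [hr]
    ring

end FieldAux

end AuxLemmas

set_option maxHeartbeats 1000000 in
/-- Commuting locally nilpotent derivations of `K[x,y]` that are linearly independent over
`K[x,y]` are `D_a, D_c` for a coordinate pair `(a,c)`. -/
theorem lnd_commuting_independent
    (K : Type*) [Field K] [IsAlgClosed K] [CharZero K]
    (D₁ D₂ : Derivation K (MvPolynomial (Fin 2) K) (MvPolynomial (Fin 2) K))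
    (hln₁ : ∀ a : MvPolynomial (Fin 2) K, ∃ n : ℕ, (fun x => D₁ x)^[n] a = 0)
    (hln₂ : ∀ a : MvPolynomial (Fin 2) K, ∃ n : ℕ, (fun x => D₂ x)^[n] a = 0)
    (hind : ∀ r₁ r₂ : MvPolynomial (Fin 2) K, r₁ • D₁ + r₂ • D₂ = 0 → r₁ = 0 ∧ r₂ = 0)
    (hcomm : ⁅D₁, D₂⁆ = 0) :
    ∃ a c : MvPolynomial (Fin 2) K,
      Algebra.adjoin K ({a, c} : Set (MvPolynomial (Fin 2) K)) = ⊤ ∧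
      D₁ = jacDer a ∧ D₂ = jacDer c := by
  classical
  -- commutation pointwise
  have hc : ∀ p, D₁ (D₂ p) = D₂ (D₁ p) := by
    intro p
    have h0 : (⁅D₁, D₂⁆ : Derivation K _ _) p = 0 := by rw [hcomm]; rfl
    rw [Derivation.commutator_apply] at h0
    exact sub_eq_zero.mp h0
  -- linear independence on values
  have hre : ∀ r₁ r₂ : MvPolynomial (Fin 2) K,
      r₁ * D₁ (X 0) + r₂ * D₂ (X 0) = 0 → r₁ * D₁ (X 1) + r₂ * D₂ (X 1) = 0 →
      r₁ = 0 ∧ r₂ = 0 := by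
    intro r₁ r₂ h1 h2
    apply hind
    apply MvPolynomial.derivation_ext
    intro i
    fin_cases i <;>
      simp only [Derivation.add_apply, Derivation.smul_apply, smul_eq_mul,
        Derivation.zero_apply] <;>
      assumption
  -- Δ ≠ 0
  have hΔne : D₁ (X 0) * D₂ (X 1) - D₁ (X 1) * D₂ (X 0) ≠ 0 := by
    intro h0
    by_cases hfu : D₁ (X 0) = 0 ∧ D₂ (X 0) = 0
    · obtain ⟨hv, hg⟩ := hre (D₂ (X 1)) (-(D₁ (X 1)))
        (by rw [hfu.1, hfu.2]; ring) (by ring)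
      have hD₁0 : D₁ = 0 := by
        apply MvPolynomial.derivation_ext
        intro i
        fin_cases i <;> simp only [Derivation.zero_apply]
        · exact hfu.1
        · exact neg_eq_zero.mp hg
      have h1 : (1 : MvPolynomial (Fin 2) K) • D₁ + (0 : MvPolynomial (Fin 2) K) • D₂ = 0 := by
        rw [hD₁0]; simp
      exact one_ne_zero (hind 1 0 h1).1
    · obtain ⟨hu, hf⟩ := hre (D₂ (X 0)) (-(D₁ (X 0)))
        (by ring) (by linear_combination -h0)
      exact hfu ⟨neg_eq_zero.mp hf, hu⟩
  -- divergence of D₁ is zero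
  have hD1Δ : D₁ (D₁ (X 0) * D₂ (X 1) - D₁ (X 1) * D₂ (X 0)) =
      (pderiv 0 (D₁ (X 0)) + pderiv 1 (D₁ (X 1))) *
        (D₁ (X 0) * D₂ (X 1) - D₁ (X 1) * D₂ (X 0)) := by
    rw [map_sub, D₁.leibniz (D₁ (X 0)) (D₂ (X 1)), D₁.leibniz (D₁ (X 1)) (D₂ (X 0)),
      smul_eq_mul, smul_eq_mul, smul_eq_mul, smul_eq_mul, hc (X 0), hc (X 1),
      derivation_apply D₁ (D₁ (X 0)), derivation_apply D₁ (D₁ (X 1)),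
      derivation_apply D₂ (D₁ (X 0)), derivation_apply D₂ (D₁ (X 1))]
    ring
  have hD2Δ : D₂ (D₁ (X 0) * D₂ (X 1) - D₁ (X 1) * D₂ (X 0)) =
      (pderiv 0 (D₂ (X 0)) + pderiv 1 (D₂ (X 1))) *
        (D₁ (X 0) * D₂ (X 1) - D₁ (X 1) * D₂ (X 0)) := by
    rw [map_sub, D₂.leibniz (D₁ (X 0)) (D₂ (X 1)), D₂.leibniz (D₁ (X 1)) (D₂ (X 0)),
      smul_eq_mul, smul_eq_mul, smul_eq_mul, smul_eq_mul, ← hc (X 0), ← hc (X 1),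
      derivation_apply D₂ (D₂ (X 0)), derivation_apply D₂ (D₂ (X 1)),
      derivation_apply D₁ (D₂ (X 0)), derivation_apply D₁ (D₂ (X 1))]
    ring
  have hdiv1 : pderiv 0 (D₁ (X 0)) + pderiv 1 (D₁ (X 1)) = 0 :=
    w_eq_zero D₁ hln₁ hΔne hD1Δ
  have hdiv2 : pderiv 0 (D₂ (X 0)) + pderiv 1 (D₂ (X 1)) = 0 :=
    w_eq_zero D₂ hln₂ hΔne hD2Δ
  have hD1Δ0 : D₁ (D₁ (X 0) * D₂ (X 1) - D₁ (X 1) * D₂ (X 0)) = 0 := by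
    rw [hD1Δ, hdiv1, zero_mul]
  have hD2Δ0 : D₂ (D₁ (X 0) * D₂ (X 1) - D₁ (X 1) * D₂ (X 0)) = 0 := by
    rw [hD2Δ, hdiv2, zero_mul]
  -- joint kernel is constants
  have hker : ∀ h : MvPolynomial (Fin 2) K, D₁ h = 0 → D₂ h = 0 → ∃ k : K, h = C k := by
    intro h h1 h2
    rw [derivation_apply D₁ h] at h1
    rw [derivation_apply D₂ h] at h2
    have hx : (D₁ (X 0) * D₂ (X 1) - D₁ (X 1) * D₂ (X 0)) * pderiv 0 h = 0 := by
      linear_combination D₂ (X 1) * h1 - D₁ (X 1) * h2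
    have hy : (D₁ (X 0) * D₂ (X 1) - D₁ (X 1) * D₂ (X 0)) * pderiv 1 h = 0 := by
      linear_combination D₁ (X 0) * h2 - D₂ (X 0) * h1
    have hx0 : pderiv 0 h = 0 := (mul_eq_zero.mp hx).resolve_left hΔne
    have hy0 : pderiv 1 h = 0 := (mul_eq_zero.mp hy).resolve_left hΔne
    exact ⟨coeff 0 h, eq_C_of_pderiv_eq_zero hx0 hy0⟩
  -- Δ is a nonzero constant
  obtain ⟨lam, hlam⟩ := hker _ hD1Δ0 hD2Δ0
  have hlamne : lam ≠ 0 := by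
    intro h0
    rw [h0, map_zero] at hlam
    exact hΔne hlam
  -- potentials
  obtain ⟨a, ha0, ha1⟩ := exists_potential hdiv1
  obtain ⟨c, hc0, hc1⟩ := exists_potential hdiv2
  -- jacobian derivations
  have hpd01 : pderiv (0 : Fin 2) (X 1 : MvPolynomial (Fin 2) K) = 0 :=
    pderiv_X_of_ne (by decide)
  have hpd10 : pderiv (1 : Fin 2) (X 0 : MvPolynomial (Fin 2) K) = 0 :=
    pderiv_X_of_ne (by decide)
  have hjac1 : jacDer a = D₁ := by
    apply MvPolynomial.derivation_ext
    intro i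
    have h0 : jacDer a (X 0) = D₁ (X 0) := by
      simp only [jacDer, Derivation.sub_apply, Derivation.smul_apply, smul_eq_mul,
        pderiv_X_self, hpd01, hpd10, ha0, ha1]
      ring
    have h1 : jacDer a (X 1) = D₁ (X 1) := by
      simp only [jacDer, Derivation.sub_apply, Derivation.smul_apply, smul_eq_mul,
        pderiv_X_self, hpd01, hpd10, ha0, ha1]
      ring
    fin_cases i
    · exact h0
    · exact h1
  have hjac2 : jacDer c = D₂ := by
    apply MvPolynomial.derivation_ext
    intro i
    have h0 : jacDer c (X 0) = D₂ (X 0) := by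
      simp only [jacDer, Derivation.sub_apply, Derivation.smul_apply, smul_eq_mul,
        pderiv_X_self, hpd01, hpd10, hc0, hc1]
      ring
    have h1 : jacDer c (X 1) = D₂ (X 1) := by
      simp only [jacDer, Derivation.sub_apply, Derivation.smul_apply, smul_eq_mul,
        pderiv_X_self, hpd01, hpd10, hc0, hc1]
      ring
    fin_cases i
    · exact h0
    · exact h1
  -- basic relations
  have hD1a : D₁ a = 0 := by
    rw [derivation_apply D₁ a, ha0, ha1]; ring
  have hD2a : D₂ a = - C lam := by
    rw [derivation_apply D₂ a, ha0, ha1, ← hlam]; ring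
  have hD1c : D₁ c = C lam := by
    rw [derivation_apply D₁ c, hc0, hc1, ← hlam]; ring
  have hD2c : D₂ c = 0 := by
    rw [derivation_apply D₂ c, hc0, hc1]; ring
  -- step B : kernel of D₁ is K[a]
  have stepB : ∀ (n : ℕ) (h : MvPolynomial (Fin 2) K), (fun x => D₂ x)^[n] h = 0 →
      D₁ h = 0 → ∃ φ : Polynomial K, h = Polynomial.aeval a φ := by
    intro n
    induction n with
    | zero =>
      intro h h0 _
      exact ⟨0, by simpa using h0⟩
    | succ n IH =>
      intro h hiter h1
      have hq : (fun x => D₂ x)^[n] (D₂ h) = 0 := by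
        rw [← Function.iterate_succ_apply]; exact hiter
      have hq1 : D₁ (D₂ h) = 0 := by rw [hc h, h1, map_zero]
      obtain ⟨φ, hφ⟩ := IH (D₂ h) hq hq1
      obtain ⟨ψ, hψ⟩ := exists_antideriv_poly φ
      have hD2Q : D₂ (C (-lam⁻¹) * Polynomial.aeval a ψ) = D₂ h := by
        rw [D₂.leibniz, smul_eq_mul, smul_eq_mul, derivation_C, mul_zero, add_zero,
          Derivation.map_aeval, hψ, hD2a, smul_eq_mul, ← hφ]
        have hCC : C (-lam⁻¹) * -C lam = (1 : MvPolynomial (Fin 2) K) := by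
          rw [← map_neg, ← C_mul, show -lam⁻¹ * -lam = 1 by field_simp, map_one]
        calc C (-lam⁻¹) * (D₂ h * -C lam) = C (-lam⁻¹) * -C lam * D₂ h := by ring
          _ = D₂ h := by rw [hCC, one_mul]
      have hD1Q : D₁ (C (-lam⁻¹) * Polynomial.aeval a ψ) = 0 := by
        rw [D₁.leibniz, smul_eq_mul, smul_eq_mul, derivation_C, mul_zero, add_zero,
          Derivation.map_aeval, hD1a, smul_zero, mul_zero]
      obtain ⟨k, hk⟩ := hker (h - C (-lam⁻¹) * Polynomial.aeval a ψ)
        (by rw [map_sub, h1, hD1Q, sub_zero])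
        (by rw [map_sub, hD2Q, sub_self])
      refine ⟨Polynomial.C k + Polynomial.C (-lam⁻¹) * ψ, ?_⟩
      rw [map_add, map_mul, Polynomial.aeval_C, Polynomial.aeval_C]
      simp only [algebraMap_eq]
      rw [← hk]
      ring
  -- the adjoin
  have hrange : ({a, c} : Set (MvPolynomial (Fin 2) K)) = Set.range ![a, c] := by
    ext t
    simp only [Set.mem_insert_iff, Set.mem_singleton_iff, Set.mem_range, Fin.exists_fin_two,
      Matrix.cons_val_zero, Matrix.cons_val_one, Matrix.head_cons]
    tauto
  have hTrange : Algebra.adjoin K ({a, c} : Set (MvPolynomial (Fin 2) K)) =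
      (MvPolynomial.aeval (R := K) ![a, c]).range := by
    rw [hrange, Algebra.adjoin_range_eq_range_aeval]
  have haT : a ∈ Algebra.adjoin K ({a, c} : Set (MvPolynomial (Fin 2) K)) :=
    Algebra.subset_adjoin (by simp)
  -- step C
  have stepC : ∀ (n : ℕ) (h : MvPolynomial (Fin 2) K), (fun x => D₁ x)^[n] h = 0 →
      h ∈ Algebra.adjoin K ({a, c} : Set (MvPolynomial (Fin 2) K)) := by
    intro n
    induction n with
    | zero =>
      intro h h0
      simp only [Function.iterate_zero, id] at h0
      rw [h0]
      exact Subalgebra.zero_mem _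
    | succ n IH =>
      intro h hiter
      have hq : (fun x => D₁ x)^[n] (D₁ h) = 0 := by
        rw [← Function.iterate_succ_apply]; exact hiter
      have hqT := IH (D₁ h) hq
      rw [hTrange] at hqT
      obtain ⟨P, hP0⟩ := hqT
      have hP : MvPolynomial.aeval (R := K) ![a, c] P = D₁ h := hP0
      obtain ⟨Pi, hPi⟩ := exists_pderiv_eq 1 P
      have hD1Q : D₁ (C lam⁻¹ * MvPolynomial.aeval (R := K) ![a, c] Pi) = D₁ h := by
        rw [D₁.leibniz, smul_eq_mul, smul_eq_mul, derivation_C, mul_zero, add_zero,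
          derivation_aeval2 D₁ ![a, c] Pi]
        simp only [Matrix.cons_val_zero, Matrix.cons_val_one, Matrix.head_cons]
        rw [hD1a, mul_zero, zero_add, hD1c, hPi, hP]
        have hCC : C lam⁻¹ * C lam = (1 : MvPolynomial (Fin 2) K) := by
          rw [← C_mul, show lam⁻¹ * lam = 1 by field_simp, map_one]
        calc C lam⁻¹ * (D₁ h * C lam) = C lam⁻¹ * C lam * D₁ h := by ring
          _ = D₁ h := by rw [hCC, one_mul]
      have hQT : C lam⁻¹ * MvPolynomial.aeval (R := K) ![a, c] Pi ∈
          Algebra.adjoin K ({a, c} : Set (MvPolynomial (Fin 2) K)) := by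
        apply mul_mem
        · rw [← algebraMap_eq]
          exact Subalgebra.algebraMap_mem _ _
        · rw [hTrange]
          exact ⟨Pi, rfl⟩
      obtain ⟨n₂, hn₂⟩ := hln₂ (h - C lam⁻¹ * MvPolynomial.aeval (R := K) ![a, c] Pi)
      obtain ⟨φ, hφ⟩ := stepB n₂ _ hn₂ (by rw [map_sub, hD1Q, sub_self])
      have hmem : h - C lam⁻¹ * MvPolynomial.aeval (R := K) ![a, c] Pi ∈
          Algebra.adjoin K ({a, c} : Set (MvPolynomial (Fin 2) K)) := by
        rw [hφ]
        have : Polynomial.aeval a φ ∈ Algebra.adjoin K ({a} : Set (MvPolynomial (Fin 2) K)) := by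
          rw [Algebra.adjoin_singleton_eq_range_aeval]
          exact ⟨φ, rfl⟩
        exact Algebra.adjoin_mono (by simp) this
      have := add_mem hmem hQT
      simpa using this
  refine ⟨a, c, ?_, hjac1.symm, hjac2.symm⟩
  rw [eq_top_iff]
  intro x _
  obtain ⟨n, hn⟩ := hln₁ x
  exact stepC n x hn
end

section
/- Let L be a Lie subalgebra of Der_K(K[x,y]) consisting of locally nilpotent derivations and containing ∂/∂x, ∂/∂y, and x·∂/∂y. Then every element D ∈ L of the form D = p(x,y)∂/∂x + q(x,y)∂/∂y with deg p ≤ 1 and deg q ≤ 1 lies in the K-span of ∂/∂x, ∂/∂y, x·∂/∂y. -/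
open MvPolynomial


private lemma mon_cases' (m : Fin 2 →₀ ℕ) (h : m 0 + m 1 ≤ 1) :
    m = 0 ∨ m = Finsupp.single 0 1 ∨ m = Finsupp.single 1 1 := by
  have key : ∀ i : Fin 2, m i = (if m 0 = 1 then Finsupp.single (0:Fin 2) 1
    else if m 1 = 1 then Finsupp.single (1:Fin 2) 1 else 0) i := by
    intro i; fin_cases i <;> split_ifs <;> simp_all [Finsupp.single_apply] <;> omega
  have : m = _ := Finsupp.ext key
  split_ifs at this
  · right; left; exact this
  · right; right; exact this
  · left; exact this

private lemma deg_le_one_decomp' {K : Type*} [CommRing K] (p : MvPolynomial (Fin 2) K)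
    (h : p.totalDegree ≤ 1) :
    p = C (coeff 0 p) + C (coeff (Finsupp.single 0 1) p) * X 0
      + C (coeff (Finsupp.single 1 1) p) * X 1 := by
  ext m
  by_cases hm : coeff m p = 0
  · rw [hm]
    have c0 : m ≠ 0 ∨ coeff 0 p = 0 := by
      rcases eq_or_ne m 0 with rfl | h'; · right; exact hm
      · left; exact h'
    have c1 : m ≠ Finsupp.single 0 1 ∨ coeff (Finsupp.single 0 1) p = 0 := by
      rcases eq_or_ne m (Finsupp.single 0 1) with rfl | h'; · right; exact hm
      · left; exact h'
    have c2 : m ≠ Finsupp.single 1 1 ∨ coeff (Finsupp.single 1 1) p = 0 := by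
      rcases eq_or_ne m (Finsupp.single 1 1) with rfl | h'; · right; exact hm
      · left; exact h'
    simp only [coeff_add, coeff_C, coeff_C_mul, coeff_X']
    rcases c0 with h' | h' <;> rcases c1 with h'' | h'' <;> rcases c2 with h''' | h''' <;>
      simp_all [Ne.symm]
  · have hle : m 0 + m 1 ≤ 1 := by
      have := MvPolynomial.le_totalDegree (mem_support_iff.mpr hm)
      have hsum : m.sum (fun _ e => e) = m 0 + m 1 := by
        rw [Finsupp.sum_fintype] <;> simp [Fin.sum_univ_two]
      omega
    rcases mon_cases' m hle with rfl | rfl | rfl <;>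
      simp [coeff_X', Finsupp.single_eq_zero, (by decide : (0:Fin 2) ≠ 1),
        Finsupp.single_left_inj, Finsupp.single_eq_single_iff, eq_comm]


/-- Let `L ⊆ Der_K(K[x,y])` be a Lie subalgebra of locally nilpotent derivations containing
`∂/∂x`, `∂/∂y`, `x∂/∂y`. Then every `D = p∂/∂x + q∂/∂y ∈ L` with `deg p ≤ 1`, `deg q ≤ 1`
lies in the `K`-span of `∂/∂x`, `∂/∂y`, `x∂/∂y`. -/
theorem lnd_subalgebra_linear_part
    (K : Type*) [Field K] [IsAlgClosed K] [CharZero K]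
    (L : LieSubalgebra K (Derivation K (MvPolynomial (Fin 2) K) (MvPolynomial (Fin 2) K)))
    (hL : ∀ D ∈ L, ∀ a : MvPolynomial (Fin 2) K, ∃ n : ℕ, (fun x => D x)^[n] a = 0)
    (hx : (pderiv 0 : Derivation K (MvPolynomial (Fin 2) K) (MvPolynomial (Fin 2) K)) ∈ L)
    (hy : (pderiv 1 : Derivation K (MvPolynomial (Fin 2) K) (MvPolynomial (Fin 2) K)) ∈ L)
    (hxy : (X 0 : MvPolynomial (Fin 2) K) •
      (pderiv 1 : Derivation K (MvPolynomial (Fin 2) K) (MvPolynomial (Fin 2) K)) ∈ L) :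
    ∀ D ∈ L, (D (X 0)).totalDegree ≤ 1 → (D (X 1)).totalDegree ≤ 1 →
      D ∈ Submodule.span K
        ({(pderiv 0 : Derivation K (MvPolynomial (Fin 2) K) (MvPolynomial (Fin 2) K)),
          pderiv 1, (X 0 : MvPolynomial (Fin 2) K) • pderiv 1} :
          Set (Derivation K (MvPolynomial (Fin 2) K) (MvPolynomial (Fin 2) K))) := by
  intro D hD hp hq
  set p := D (X 0) with hpdef
  set q := D (X 1) with hqdef
  set a := coeff 0 p
  set b := coeff (Finsupp.single 0 1) p
  set c := coeff (Finsupp.single 1 1) p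
  set d := coeff 0 q
  set e := coeff (Finsupp.single 0 1) q
  set f := coeff (Finsupp.single 1 1) q
  have hpd : p = C a + C b * X 0 + C c * X 1 := deg_le_one_decomp' p hp
  have hqd : q = C d + C e * X 0 + C f * X 1 := deg_le_one_decomp' q hq
  set xdy : Derivation K (MvPolynomial (Fin 2) K) (MvPolynomial (Fin 2) K) :=
    (X 0 : MvPolynomial (Fin 2) K) • pderiv 1 with hxdy
  set D' := D - a • pderiv 0 - d • pderiv 1 - e • xdy with hD'def
  have hD' : D' ∈ L := by
    exact L.sub_mem (L.sub_mem (L.sub_mem hD (L.smul_mem a hx)) (L.smul_mem d hy))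
      (L.smul_mem e hxy)
  have hD'x : D' (X 0) = C b * X 0 + C c * X 1 := by
    simp only [hD'def, Derivation.sub_apply, Derivation.smul_apply, hxdy]
    rw [← hpdef, hpd]
    simp [pderiv_X_of_ne, MvPolynomial.smul_eq_C_mul]
    ring
  have hD'y : D' (X 1) = C f * X 1 := by
    simp only [hD'def, Derivation.sub_apply, Derivation.smul_apply, hxdy]
    rw [← hqdef, hqd]
    simp [pderiv_X_of_ne, MvPolynomial.smul_eq_C_mul]
    ring
  -- E = [x∂y, D'], E(X0) = c • X 0
  set E := ⁅xdy, D'⁆ with hEdef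
  have hE : E ∈ L := L.lie_mem hxy hD'
  have hEx : E (X 0) = c • X 0 := by
    rw [hEdef, Derivation.commutator_apply, hD'x, hxdy]
    simp [pderiv_X_of_ne, MvPolynomial.smul_eq_C_mul]
    ring
  -- local nilpotency kills c
  have hc : c = 0 := by
    obtain ⟨n, hn⟩ := hL E hE (X 0)
    have hiter : ∀ k : ℕ, (fun x => E x)^[k] (X 0) = c ^ k • X 0 := by
      intro k; induction k with
      | zero => simp
      | succ k ih =>
        rw [Function.iterate_succ_apply', ih, E.map_smul, hEx, smul_smul, ← pow_succ]
    rw [hiter n] at hn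
    rcases smul_eq_zero.mp hn with h' | h'
    · by_contra hc0
      exact (pow_ne_zero n hc0) h'
    · exact absurd h' (MvPolynomial.X_ne_zero 0)
  have hD'x2 : D' (X 0) = b • X 0 := by
    rw [hD'x, hc]; simp [MvPolynomial.smul_eq_C_mul]
  have hb : b = 0 := by
    obtain ⟨n, hn⟩ := hL D' hD' (X 0)
    have hiter : ∀ k : ℕ, (fun x => D' x)^[k] (X 0) = b ^ k • X 0 := by
      intro k; induction k with
      | zero => simp
      | succ k ih =>
        rw [Function.iterate_succ_apply', ih, D'.map_smul, hD'x2, smul_smul, ← pow_succ]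
    rw [hiter n] at hn
    rcases smul_eq_zero.mp hn with h' | h'
    · by_contra hb0
      exact (pow_ne_zero n hb0) h'
    · exact absurd h' (MvPolynomial.X_ne_zero 0)
  have hD'y2 : D' (X 1) = f • X 1 := by
    rw [hD'y]; simp [MvPolynomial.smul_eq_C_mul]
  have hf : f = 0 := by
    obtain ⟨n, hn⟩ := hL D' hD' (X 1)
    have hiter : ∀ k : ℕ, (fun x => D' x)^[k] (X 1) = f ^ k • X 1 := by
      intro k; induction k with
      | zero => simp
      | succ k ih =>
        rw [Function.iterate_succ_apply', ih, D'.map_smul, hD'y2, smul_smul, ← pow_succ]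
    rw [hiter n] at hn
    rcases smul_eq_zero.mp hn with h' | h'
    · by_contra hf0
      exact (pow_ne_zero n hf0) h'
    · exact absurd h' (MvPolynomial.X_ne_zero 1)
  -- D' = 0
  have hD'0 : D' = 0 := by
    apply MvPolynomial.derivation_ext
    intro i
    fin_cases i
    · show D' (X 0) = (0 : Derivation K _ _) (X 0); rw [hD'x2, hb]; simp
    · show D' (X 1) = (0 : Derivation K _ _) (X 1); rw [hD'y2, hf]; simp
  have hDeq : D = a • pderiv 0 + d • pderiv 1 + e • xdy := by
    have : D - a • pderiv 0 - d • pderiv 1 - e • xdy = 0 := hD'0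
    linear_combination (norm := module) this
  rw [hDeq]
  apply Submodule.add_mem
  apply Submodule.add_mem
  · exact Submodule.smul_mem _ _ (Submodule.subset_span (Set.mem_insert _ _))
  · exact Submodule.smul_mem _ _ (Submodule.subset_span (Set.mem_insert_of_mem _ (Set.mem_insert _ _)))
  · exact Submodule.smul_mem _ _ (Submodule.subset_span (Set.mem_insert_of_mem _ (Set.mem_insert_of_mem _ rfl)))
end

section
/- Let L be a Lie subalgebra of Der_K(K[x,y]) consisting of locally nilpotent derivations and containing ∂/∂x, ∂/∂y, and x·∂/∂y. Then every element of L has the form α·∂/∂x + q(x)·∂/∂y with α ∈ K and q ∈ K[x]; that is, L ⊆ u₂(K). -/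
open MvPolynomial

section Aux
set_option linter.unusedSectionVars false
variable {K : Type*} [Field K] [CharZero K]
local notation "𝔸" => MvPolynomial (Fin 2) K
local notation "Der" => Derivation K (MvPolynomial (Fin 2) K) (MvPolynomial (Fin 2) K)

lemma my_coeff_pderiv (i : Fin 2) (p : 𝔸) (m : Fin 2 →₀ ℕ) :
    coeff m (pderiv i p) = ((m i + 1 : ℕ) : K) * coeff (m + Finsupp.single i 1) p := by
  induction p using MvPolynomial.induction_on' with
  | monomial s a =>
    rw [pderiv_monomial, coeff_monomial, coeff_monomial]
    by_cases h : s = m + Finsupp.single i 1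
    · subst h
      rw [if_pos (by simp), if_pos rfl]
      simp [Finsupp.add_apply]
      push_cast
      ring
    · rw [if_neg h]
      by_cases h2 : s - Finsupp.single i 1 = m
      · rw [if_pos h2]
        by_cases h3 : s i = 0
        · simp [h3]
        · exfalso
          apply h
          ext j
          rcases eq_or_ne j i with rfl | hj
          · rw [Finsupp.add_apply, Finsupp.single_eq_same, ← h2, Finsupp.tsub_apply,
              Finsupp.single_eq_same]
            omega
          · rw [Finsupp.add_apply, Finsupp.single_eq_of_ne' (Ne.symm hj), ← h2,
              Finsupp.tsub_apply, Finsupp.single_eq_of_ne' (Ne.symm hj)]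
            omega
      · rw [if_neg h2, mul_zero]
  | add p q hp hq => simp only [map_add, coeff_add, hp, hq]; ring

lemma coeff_eq_zero_of_pderiv (i : Fin 2) (p : 𝔸) (h : pderiv i p = 0)
    (m : Fin 2 →₀ ℕ) (hm : m i ≠ 0) : coeff m p = 0 := by
  have key := my_coeff_pderiv i p (m - Finsupp.single i 1)
  rw [h, coeff_zero] at key
  have hms : m - Finsupp.single i 1 + Finsupp.single i 1 = m := by
    ext j
    rcases eq_or_ne j i with rfl | hj
    · rw [Finsupp.add_apply, Finsupp.tsub_apply, Finsupp.single_eq_same]; omega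
    · rw [Finsupp.add_apply, Finsupp.tsub_apply, Finsupp.single_eq_of_ne' (Ne.symm hj)]; omega
  rw [hms] at key
  rcases mul_eq_zero.mp key.symm with h' | h'
  · exact absurd h' (by simp; exact Nat.cast_add_one_ne_zero _)
  · exact h'

lemma eq_C_of_pderiv (p : 𝔸) (h0 : pderiv 0 p = 0) (h1 : pderiv 1 p = 0) :
    ∃ c : K, p = C c := by
  refine ⟨coeff 0 p, MvPolynomial.ext _ _ fun m => ?_⟩
  rcases eq_or_ne m 0 with rfl | hm
  · simp
  · have hj : ∃ j, m j ≠ 0 := by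
      by_contra hc
      push_neg at hc
      exact hm (Finsupp.ext hc)
    obtain ⟨j, hj⟩ := hj
    have hz : coeff m p = 0 := by
      match j, hj with
      | 0, hj => exact coeff_eq_zero_of_pderiv 0 p h0 m hj
      | 1, hj => exact coeff_eq_zero_of_pderiv 1 p h1 m hj
    rw [hz, coeff_C, if_neg (Ne.symm hm)]

lemma exists_aeval_of_pderiv (p : 𝔸) (h1 : pderiv 1 p = 0) :
    ∃ q : Polynomial K, p = Polynomial.aeval (X 0 : 𝔸) q := by
  refine ⟨∑ m ∈ p.support, Polynomial.C (coeff m p) * Polynomial.X ^ (m 0), ?_⟩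
  rw [map_sum]
  conv_lhs => rw [← support_sum_monomial_coeff p]
  refine Finset.sum_congr rfl fun m hm => ?_
  have h0 : m 1 = 0 := by
    by_contra hne
    exact (mem_support_iff.mp hm) (coeff_eq_zero_of_pderiv 1 p h1 m hne)
  have hm0 : m = Finsupp.single 0 (m 0) := by
    ext j
    match j with
    | 0 => simp
    | 1 => simp [h0, Finsupp.single_apply]
  rw [map_mul, map_pow, Polynomial.aeval_X, Polynomial.aeval_C, MvPolynomial.algebraMap_eq,
    C_mul_X_pow_eq_monomial]
  rw [← hm0]

lemma pderiv_comm01 (p : 𝔸) : pderiv 1 (pderiv 0 p) = pderiv 0 (pderiv 1 p) := by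
  apply MvPolynomial.ext
  intro m
  rw [my_coeff_pderiv, my_coeff_pderiv, my_coeff_pderiv, my_coeff_pderiv]
  rw [Finsupp.add_apply, Finsupp.add_apply,
    Finsupp.single_eq_of_ne (by decide : (1 : Fin 2) ≠ 0),
    Finsupp.single_eq_of_ne (by decide : (0 : Fin 2) ≠ 1),
    add_right_comm m (Finsupp.single 1 1) (Finsupp.single 0 1)]
  push_cast
  ring

lemma chainRule (E : Der) (p : 𝔸) :
    E p = pderiv 0 p * E (X 0) + pderiv 1 p * E (X 1) := by
  induction p using MvPolynomial.induction_on with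
  | C a => simp [derivation_C]
  | add p q hp hq => simp only [map_add, hp, hq]; ring
  | mul_X p i hp =>
    rw [Derivation.leibniz, smul_eq_mul, smul_eq_mul, hp]
    match i with
    | 0 =>
      rw [pderiv_mul, pderiv_mul, pderiv_X_self, pderiv_X_of_ne (by decide : (0:Fin 2) ≠ 1)]
      ring
    | 1 =>
      rw [pderiv_mul, pderiv_mul, pderiv_X_self, pderiv_X_of_ne (by decide : (1:Fin 2) ≠ 0)]
      ring

lemma no_eigen (D : Der) (p r : 𝔸) (hr : D r = 0) (heig : D p = r * p)
    (hp : p ≠ 0) (hr0 : r ≠ 0) (hn : ∃ n : ℕ, (fun x => D x)^[n] p = 0) : False := by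
  have hpow : ∀ n : ℕ, D (r ^ n) = 0 := by
    intro n
    induction n with
    | zero => simpa using D.map_one_eq_zero
    | succ n ih => rw [pow_succ, Derivation.leibniz, ih, hr]; simp
  have key : ∀ n : ℕ, (fun x => D x)^[n] p = r ^ n * p := by
    intro n
    induction n with
    | zero => simp
    | succ n ih =>
      rw [Function.iterate_succ_apply', ih]
      show D (r ^ n * p) = r ^ (n + 1) * p
      rw [Derivation.leibniz, hpow, heig, smul_eq_mul, smul_eq_mul, pow_succ]
      ring
  obtain ⟨n, hn⟩ := hn
  rw [key] at hn
  exact (mul_ne_zero (pow_ne_zero _ hr0) hp) hn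

noncomputable def adn (P D : Der) : ℕ → Der
  | 0 => D
  | n + 1 => ⁅P, adn P D n⁆

lemma adn_mem {L : LieSubalgebra K Der} {P D : Der} (hP : P ∈ L) (hD : D ∈ L) :
    ∀ n, adn P D n ∈ L
  | 0 => hD
  | n + 1 => L.lie_mem hP (adn_mem hP hD n)

lemma adn_pderiv_apply_X (i j : Fin 2) (D : Der) (n : ℕ) :
    adn (pderiv i) D n (X j) = (fun x => pderiv i x)^[n] (D (X j)) := by
  induction n with
  | zero => rfl
  | succ n ih =>
    have hX : adn (pderiv i) D n (pderiv i (X j)) = 0 := by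
      rcases eq_or_ne j i with rfl | hji
      · rw [pderiv_X_self, Derivation.map_one_eq_zero]
      · rw [pderiv_X_of_ne hji, map_zero]
    rw [show adn (pderiv i) D (n + 1) = ⁅pderiv i, adn (pderiv i) D n⁆ from rfl,
      Derivation.commutator_apply, hX, sub_zero, ih]
    exact (Function.iterate_succ_apply' (fun x => pderiv i x) n (D (X j))).symm

-- iterated pderiv 0 preserves "no y" property
lemma iter_px_y_free (p : 𝔸) (h : pderiv 1 p = 0) (k : ℕ) :
    pderiv 1 ((fun x => pderiv 0 x)^[k] p) = 0 := by
  induction k with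
  | zero => exact h
  | succ k ih =>
    rw [Function.iterate_succ_apply']
    show pderiv 1 (pderiv 0 _) = 0
    rw [pderiv_comm01, ih, map_zero]

/-- (3a): if `E (X 0) = 0` and `E (X 1) = a + b * X 1` with `a, b` y-free,
and `E` is locally nilpotent, then `b = 0`. -/
lemma lin_coeff_zero (E : Der) (hln : ∀ a : 𝔸, ∃ n : ℕ, (fun x => E x)^[n] a = 0)
    (a b : 𝔸) (h0 : E (X 0) = 0) (h1 : E (X 1) = a + b * X 1)
    (ha : pderiv 1 a = 0) (hb : pderiv 1 b = 0) : b = 0 := by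
  by_contra hbne
  have hEa : E a = 0 := by rw [chainRule E a, h0, ha]; ring
  have hEb : E b = 0 := by rw [chainRule E b, h0, hb]; ring
  have hEp : E (a + b * X 1) = b * (a + b * X 1) := by
    rw [map_add, hEa, Derivation.leibniz, hEb, h1, smul_eq_mul, smul_eq_mul]
    ring
  have hpne : a + b * X 1 ≠ 0 := by
    intro hcon
    have : pderiv 1 (a + b * X 1) = 0 := by rw [hcon, map_zero]
    rw [map_add, ha, pderiv_mul, hb, pderiv_X_self, zero_add, zero_mul, zero_add, mul_one] at this
    exact hbne this
  exact no_eigen E (a + b * X 1) b hEb hEp hpne hbne (hln _)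

set_option maxHeartbeats 1600000 in
/-- (2): if `E ∈ L` and `E (X 0)` is y-free then it is constant. -/
lemma Dx_const {L : LieSubalgebra K Der}
    (hL : ∀ D ∈ L, ∀ a : 𝔸, ∃ n : ℕ, (fun x => D x)^[n] a = 0)
    (hpx : (pderiv 0 : Der) ∈ L) (E : Der) (hE : E ∈ L)
    (hF : pderiv 1 (E (X 0)) = 0) : ∃ γ : K, E (X 0) = C γ := by
  set F := E (X 0) with hFdef
  rcases eq_or_ne (pderiv 0 F) 0 with h | h
  · exact eq_C_of_pderiv F h hF
  exfalso
  classical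
  have hex : ∃ n : ℕ, (fun x => (pderiv 0 : Der) x)^[n] F = 0 := hL _ hpx F
  set n₀ := Nat.find hex with hn₀
  have hspec : (fun x => (pderiv 0 : Der) x)^[n₀] F = 0 := Nat.find_spec hex
  have h2 : 2 ≤ n₀ := by
    rcases Nat.lt_or_ge n₀ 2 with hcon | hok
    · exfalso
      have hF0 : F ≠ 0 := fun hF0 => h (by rw [hF0, map_zero])
      have hn1 : n₀ ≠ 0 := by intro he; apply hF0; simpa [he] using hspec
      have hn2 : n₀ ≠ 1 := by intro he; apply h; simpa [he] using hspec
      omega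
    · exact hok
  set δ := (fun x => (pderiv 0 : Der) x)^[n₀ - 2] F with hδ
  have hδ1 : pderiv 0 δ ≠ 0 := by
    have : pderiv 0 δ = (fun x => (pderiv 0 : Der) x)^[n₀ - 1] F := by
      rw [hδ, ← Function.iterate_succ_apply' (fun x => (pderiv 0 : Der) x)]
      congr 1
      omega
    rw [this]
    exact Nat.find_min hex (by omega)
  have hδ2 : pderiv 0 (pderiv 0 δ) = 0 := by
    have : pderiv 0 (pderiv 0 δ) = (fun x => (pderiv 0 : Der) x)^[n₀] F := by
      rw [hδ, ← Function.iterate_succ_apply' (fun x => (pderiv 0 : Der) x),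
        ← Function.iterate_succ_apply' (fun x => (pderiv 0 : Der) x)]
      congr 1
      omega
    rw [this, hspec]
  have hyδ : pderiv 1 δ = 0 := iter_px_y_free F hF _
  have hypxδ : pderiv 1 (pderiv 0 δ) = 0 := by rw [pderiv_comm01, hyδ, map_zero]
  obtain ⟨γ₁, hγ₁⟩ := eq_C_of_pderiv (pderiv 0 δ) hδ2 hypxδ
  have hγ₁ne : γ₁ ≠ 0 := by rintro rfl; rw [map_zero] at hγ₁; exact hδ1 hγ₁
  obtain ⟨γ₀, hγ₀⟩ := eq_C_of_pderiv (δ - C γ₁ * X 0)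
    (by rw [map_sub, pderiv_C_mul, pderiv_X_self, mul_one, hγ₁, sub_self])
    (by rw [map_sub, hyδ, pderiv_C_mul, pderiv_X_of_ne (by decide : (0:Fin 2) ≠ 1), mul_zero,
      sub_self])
  have hGmem : adn (pderiv 0) E (n₀ - 2) ∈ L := adn_mem hpx hE _
  have hGX : adn (pderiv 0) E (n₀ - 2) (X 0) = δ := adn_pderiv_apply_X 0 0 E _
  have hHmem : adn (pderiv 0) E (n₀ - 2) - γ₀ • (pderiv 0 : Der) ∈ L := by
    have h1' := (L.mem_toSubmodule).2 hGmem
    have h2' := (L.mem_toSubmodule).2 (L.smul_mem γ₀ hpx)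
    exact (L.mem_toSubmodule).1 (Submodule.sub_mem _ h1' h2')
  have hHX : (adn (pderiv 0) E (n₀ - 2) - γ₀ • (pderiv 0 : Der)) (X 0) = C γ₁ * X 0 := by
    rw [Derivation.sub_apply, hGX, Derivation.smul_apply, pderiv_X_self]
    have hsm : γ₀ • (1 : 𝔸) = C γ₀ := by
      rw [Algebra.smul_def, mul_one, MvPolynomial.algebraMap_eq]
    rw [hsm]
    have : δ = C γ₀ + C γ₁ * X 0 := by rw [← hγ₀]; ring
    rw [this]; ring
  have hHC : (adn (pderiv 0) E (n₀ - 2) - γ₀ • (pderiv 0 : Der)) (C γ₁) = 0 := by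
    rw [← MvPolynomial.algebraMap_eq]
    exact Derivation.map_algebraMap _ γ₁
  exact no_eigen _ (X 0) (C γ₁) hHC hHX (X_ne_zero 0) (by simpa using hγ₁ne)
    (hL _ hHmem (X 0))

/-- (1): if `E ∈ L` and `E (X 0) = 0`, then `E (X 1)` is y-free. -/
lemma Ex_zero_y_free {L : LieSubalgebra K Der}
    (hL : ∀ D ∈ L, ∀ a : 𝔸, ∃ n : ℕ, (fun x => D x)^[n] a = 0)
    (hpy : (pderiv 1 : Der) ∈ L) (E : Der) (hE : E ∈ L)
    (h0 : E (X 0) = 0) : pderiv 1 (E (X 1)) = 0 := by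
  by_contra hyh
  classical
  set h := E (X 1) with hdef
  have hex : ∃ n : ℕ, (fun x => (pderiv 1 : Der) x)^[n] h = 0 := hL _ hpy h
  set n₀ := Nat.find hex with hn₀
  have hspec : (fun x => (pderiv 1 : Der) x)^[n₀] h = 0 := Nat.find_spec hex
  have h2 : 2 ≤ n₀ := by
    rcases Nat.lt_or_ge n₀ 2 with hcon | hok
    · exfalso
      have hh0 : h ≠ 0 := fun hc => hyh (by rw [hdef] at hc ⊢; rw [hc, map_zero])
      have hn1 : n₀ ≠ 0 := by intro he; apply hh0; simpa [he] using hspec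
      have hn2 : n₀ ≠ 1 := by intro he; apply hyh; simpa [he] using hspec
      omega
    · exact hok
  set δ := (fun x => (pderiv 1 : Der) x)^[n₀ - 2] h with hδ
  have hδ1 : pderiv 1 δ ≠ 0 := by
    have heq : pderiv 1 δ = (fun x => (pderiv 1 : Der) x)^[n₀ - 1] h := by
      rw [hδ, ← Function.iterate_succ_apply' (fun x => (pderiv 1 : Der) x)]
      congr 1
      omega
    rw [heq]
    exact Nat.find_min hex (by omega)
  have hδ2 : pderiv 1 (pderiv 1 δ) = 0 := by
    have heq : pderiv 1 (pderiv 1 δ) = (fun x => (pderiv 1 : Der) x)^[n₀] h := by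
      rw [hδ, ← Function.iterate_succ_apply' (fun x => (pderiv 1 : Der) x),
        ← Function.iterate_succ_apply' (fun x => (pderiv 1 : Der) x)]
      congr 1
      omega
    rw [heq, hspec]
  have hya : pderiv 1 (δ - pderiv 1 δ * X 1) = 0 := by
    rw [map_sub, pderiv_mul, hδ2, pderiv_X_self, zero_mul, zero_add, mul_one, sub_self]
  have hEmem : adn (pderiv 1) E (n₀ - 2) ∈ L := adn_mem hpy hE _
  have hEmX0 : adn (pderiv 1) E (n₀ - 2) (X 0) = 0 := by
    rw [adn_pderiv_apply_X, h0]
    exact Function.iterate_fixed (map_zero _) _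
  have hEmX1 : adn (pderiv 1) E (n₀ - 2) (X 1) = (δ - pderiv 1 δ * X 1) + pderiv 1 δ * X 1 := by
    rw [adn_pderiv_apply_X, ← hdef, ← hδ]
    ring
  exact hδ1 (lin_coeff_zero _ (hL _ hEmem) _ _ hEmX0 hEmX1 hya hδ2)

/-- (3): if `D ∈ L`, `D (X 0) = C α`, `D (X 1) = a + b * X 1` with `a, b` y-free, then `b = 0`. -/
lemma linpart_zero {L : LieSubalgebra K Der}
    (hL : ∀ D ∈ L, ∀ a : 𝔸, ∃ n : ℕ, (fun x => D x)^[n] a = 0)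
    (hpx : (pderiv 0 : Der) ∈ L) (D : Der) (hD : D ∈ L) (α : K) (a b : 𝔸)
    (h0 : D (X 0) = C α) (h1 : D (X 1) = a + b * X 1)
    (ha : pderiv 1 a = 0) (hb : pderiv 1 b = 0) : b = 0 := by
  have hEmem : (⁅(pderiv 0 : Der), D⁆ : Der) ∈ L := L.lie_mem hpx hD
  have hEX0 : (⁅(pderiv 0 : Der), D⁆ : Der) (X 0) = 0 := by
    rw [Derivation.commutator_apply, h0, pderiv_C, pderiv_X_self, Derivation.map_one_eq_zero,
      sub_zero]
  have hEX1 : (⁅(pderiv 0 : Der), D⁆ : Der) (X 1) = pderiv 0 a + pderiv 0 b * X 1 := by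
    rw [Derivation.commutator_apply, h1, pderiv_X_of_ne (by decide : (1:Fin 2) ≠ 0), map_zero,
      sub_zero, map_add, pderiv_mul, pderiv_X_of_ne (by decide : (1:Fin 2) ≠ 0), mul_zero,
      add_zero]
  have hpxb : pderiv 0 b = 0 := by
    refine lin_coeff_zero _ (hL _ hEmem) _ _ hEX0 hEX1 ?_ ?_
    · rw [pderiv_comm01, ha, map_zero]
    · rw [pderiv_comm01, hb, map_zero]
  obtain ⟨β, hβ⟩ := eq_C_of_pderiv b hpxb hb
  rcases eq_or_ne β 0 with rfl | hβne
  · rw [hβ, map_zero]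
  exfalso
  have hder : (⁅(pderiv 1 : Der), D⁆ : Der) = (C β : 𝔸) • (pderiv 1 : Der) := by
    apply derivation_ext
    intro i
    match i with
    | 0 =>
      rw [Derivation.commutator_apply, h0, pderiv_C, pderiv_X_of_ne (by decide : (0:Fin 2) ≠ 1),
        map_zero, sub_zero, Derivation.smul_apply,
        pderiv_X_of_ne (by decide : (0:Fin 2) ≠ 1), smul_zero]
    | 1 =>
      rw [Derivation.commutator_apply, h1, hβ, pderiv_X_self, Derivation.map_one_eq_zero,
        sub_zero, map_add, ha, pderiv_mul, pderiv_C, pderiv_X_self, Derivation.smul_apply,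
        pderiv_X_self]
      simp [smul_eq_mul]
  have hcomm : ∀ p : 𝔸, pderiv 1 (D p) = D (pderiv 1 p) + C β * pderiv 1 p := by
    intro p
    have hc := congrArg (fun (F : Der) => F p) hder
    simp only [Derivation.commutator_apply, Derivation.smul_apply, smul_eq_mul] at hc
    linear_combination hc
  have key : ∀ n : ℕ, pderiv 1 ((fun x => D x)^[n] (X 1)) = C (β ^ n) := by
    intro n
    induction n with
    | zero => simp
    | succ n ih =>
      rw [Function.iterate_succ_apply']
      show pderiv 1 (D _) = _
      rw [hcomm, ih]
      have hDC : D (C (β ^ n)) = 0 := by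
        rw [← MvPolynomial.algebraMap_eq]
        exact Derivation.map_algebraMap _ _
      rw [hDC, zero_add, ← map_mul, ← pow_succ']
  obtain ⟨n, hn⟩ := hL _ hD (X 1)
  have hfin := key n
  rw [hn, map_zero] at hfin
  have : (β : K) ^ n = 0 := by
    have := hfin.symm
    rwa [show (0 : 𝔸) = C (0 : K) by simp, C_inj] at this
  exact hβne (pow_eq_zero_iff'.mp this).1

/-- Step 1: for `D ∈ L`, `D (X 0)` is y-free. -/
lemma Dx_y_free {L : LieSubalgebra K Der}
    (hL : ∀ D ∈ L, ∀ a : 𝔸, ∃ n : ℕ, (fun x => D x)^[n] a = 0)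
    (hpx : (pderiv 0 : Der) ∈ L) (hpy : (pderiv 1 : Der) ∈ L)
    (hxy : (X 0 : 𝔸) • (pderiv 1 : Der) ∈ L)
    (D : Der) (hD : D ∈ L) : pderiv 1 (D (X 0)) = 0 := by
  by_contra hyf
  classical
  set f := D (X 0) with hfdef
  have hex : ∃ n : ℕ, (fun x => (pderiv 1 : Der) x)^[n] f = 0 := hL _ hpy f
  set n₀ := Nat.find hex with hn₀
  have hspec : (fun x => (pderiv 1 : Der) x)^[n₀] f = 0 := Nat.find_spec hex
  have h2 : 2 ≤ n₀ := by
    rcases Nat.lt_or_ge n₀ 2 with hcon | hok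
    · exfalso
      have hf0 : f ≠ 0 := fun hc => hyf (by rw [hfdef] at hc ⊢; rw [hc, map_zero])
      have hn1 : n₀ ≠ 0 := by intro he; apply hf0; simpa [he] using hspec
      have hn2 : n₀ ≠ 1 := by intro he; apply hyf; simpa [he] using hspec
      omega
    · exact hok
  -- F := py^[n₀ - 1] f  is nonzero, y-free, and is the X0-value of a member of L, hence C γ
  have hEmem : adn (pderiv 1) D (n₀ - 1) ∈ L := adn_mem hpy hD _
  have hEX0 : adn (pderiv 1) D (n₀ - 1) (X 0) = (fun x => (pderiv 1 : Der) x)^[n₀ - 1] f :=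
    adn_pderiv_apply_X 1 0 D _
  have hFy : pderiv 1 ((fun x => (pderiv 1 : Der) x)^[n₀ - 1] f) = 0 := by
    have heq : pderiv 1 ((fun x => (pderiv 1 : Der) x)^[n₀ - 1] f)
        = (fun x => (pderiv 1 : Der) x)^[n₀] f := by
      rw [← Function.iterate_succ_apply' (fun x => (pderiv 1 : Der) x)]
      congr 1
      omega
    rw [heq, hspec]
  obtain ⟨γ, hγ⟩ := Dx_const hL hpx _ hEmem (by rw [hEX0]; exact hFy)
  rw [hEX0] at hγ
  have hγne : γ ≠ 0 := by
    rintro rfl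
    rw [map_zero] at hγ
    exact Nat.find_min hex (show n₀ - 1 < n₀ by omega) hγ
  -- M := adn py D (n₀ - 2); py (M (X 0)) = C γ
  set M := adn (pderiv 1) D (n₀ - 2) with hM
  have hMmem : M ∈ L := adn_mem hpy hD _
  have hMX0 : M (X 0) = (fun x => (pderiv 1 : Der) x)^[n₀ - 2] f := adn_pderiv_apply_X 1 0 D _
  have hpyM : pderiv 1 (M (X 0)) = C γ := by
    rw [hMX0, ← Function.iterate_succ_apply' (fun x => (pderiv 1 : Der) x), ← hγ]
    congr 1
    omega
  -- N := ⁅X 0 • py, M⁆ has N (X 0) = C γ * X 0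
  have hNmem : (⁅(X 0 : 𝔸) • (pderiv 1 : Der), M⁆ : Der) ∈ L := L.lie_mem hxy hMmem
  have hNX0 : (⁅(X 0 : 𝔸) • (pderiv 1 : Der), M⁆ : Der) (X 0) = C γ * X 0 := by
    rw [Derivation.commutator_apply, Derivation.smul_apply, Derivation.smul_apply, hpyM,
      pderiv_X_of_ne (by decide : (0:Fin 2) ≠ 1), smul_zero, map_zero, sub_zero, smul_eq_mul]
    ring
  have hNC : (⁅(X 0 : 𝔸) • (pderiv 1 : Der), M⁆ : Der) (C γ) = 0 := by
    rw [← MvPolynomial.algebraMap_eq]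
    exact Derivation.map_algebraMap _ _
  exact no_eigen _ (X 0) (C γ) hNC hNX0 (X_ne_zero 0) (by simpa using hγne) (hL _ hNmem (X 0))

theorem lnd_subalgebra_triangular'
    (L : LieSubalgebra K Der)
    (hL : ∀ D ∈ L, ∀ a : 𝔸, ∃ n : ℕ, (fun x => D x)^[n] a = 0)
    (hx : (pderiv 0 : Der) ∈ L)
    (hy : (pderiv 1 : Der) ∈ L)
    (hxy : (X 0 : 𝔸) • (pderiv 1 : Der) ∈ L) :
    ∀ D ∈ L, ∃ (α : K) (q : Polynomial K),
      D = (C α : 𝔸) • pderiv 0 + (Polynomial.aeval (X 0 : 𝔸) q) • pderiv 1 := by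
  intro D hD
  have h1 : pderiv 1 (D (X 0)) = 0 := Dx_y_free hL hx hy hxy D hD
  obtain ⟨α, hα⟩ := Dx_const hL hx D hD h1
  -- E := ⁅X0 • py, D⁆
  have hEmem : (⁅(X 0 : 𝔸) • (pderiv 1 : Der), D⁆ : Der) ∈ L := L.lie_mem hxy hD
  have hEX0 : (⁅(X 0 : 𝔸) • (pderiv 1 : Der), D⁆ : Der) (X 0) = 0 := by
    rw [Derivation.commutator_apply, Derivation.smul_apply, Derivation.smul_apply, h1,
      pderiv_X_of_ne (by decide : (0:Fin 2) ≠ 1), smul_zero, map_zero, sub_zero]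
  have hEX1 : (⁅(X 0 : 𝔸) • (pderiv 1 : Der), D⁆ : Der) (X 1)
      = X 0 * pderiv 1 (D (X 1)) - C α := by
    rw [Derivation.commutator_apply, Derivation.smul_apply, Derivation.smul_apply,
      pderiv_X_self, smul_eq_mul, smul_eq_mul, mul_one, hα]
  have hyy : pderiv 1 (pderiv 1 (D (X 1))) = 0 := by
    have := Ex_zero_y_free hL hy _ hEmem hEX0
    rw [hEX1, map_sub, pderiv_C, sub_zero, pderiv_mul,
      pderiv_X_of_ne (by decide : (0:Fin 2) ≠ 1), zero_mul, zero_add] at this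
    rcases mul_eq_zero.mp this with hc | hc
    · exact absurd hc (X_ne_zero 0)
    · exact hc
  set g := D (X 1) with hg
  set b := pderiv 1 g with hbdef
  have hb0 : b = 0 := by
    refine linpart_zero hL hx D hD α (g - b * X 1) b hα ?_ ?_ hyy
    · ring
    · rw [map_sub, pderiv_mul, ← hbdef, hyy, pderiv_X_self, zero_mul, zero_add, mul_one,
        sub_self]
  have hgy : pderiv 1 g = 0 := hb0
  obtain ⟨q, hq⟩ := exists_aeval_of_pderiv g hgy
  refine ⟨α, q, derivation_ext fun i => ?_⟩
  match i with
  | 0 =>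
    rw [Derivation.add_apply, Derivation.smul_apply, Derivation.smul_apply, pderiv_X_self,
      pderiv_X_of_ne (by decide : (0:Fin 2) ≠ 1), smul_zero, add_zero, smul_eq_mul, mul_one, hα]
  | 1 =>
    rw [Derivation.add_apply, Derivation.smul_apply, Derivation.smul_apply, pderiv_X_self,
      pderiv_X_of_ne (by decide : (1:Fin 2) ≠ 0), smul_zero, zero_add, smul_eq_mul, mul_one,
      ← hq, hg]
end Aux

/-- Let `L ⊆ Der_K(K[x,y])` be a Lie subalgebra of locally nilpotent derivations containing
`∂/∂x`, `∂/∂y`, `x∂/∂y`. Then every element of `L` has the form `α∂/∂x + q(x)∂/∂y` with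
`α ∈ K`, `q ∈ K[x]`; that is, `L ⊆ u₂(K)`. -/
theorem lnd_subalgebra_triangular
    (K : Type*) [Field K] [IsAlgClosed K] [CharZero K]
    (L : LieSubalgebra K (Derivation K (MvPolynomial (Fin 2) K) (MvPolynomial (Fin 2) K)))
    (hL : ∀ D ∈ L, ∀ a : MvPolynomial (Fin 2) K, ∃ n : ℕ, (fun x => D x)^[n] a = 0)
    (hx : (pderiv 0 : Derivation K (MvPolynomial (Fin 2) K) (MvPolynomial (Fin 2) K)) ∈ L)
    (hy : (pderiv 1 : Derivation K (MvPolynomial (Fin 2) K) (MvPolynomial (Fin 2) K)) ∈ L)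
    (hxy : (X 0 : MvPolynomial (Fin 2) K) •
      (pderiv 1 : Derivation K (MvPolynomial (Fin 2) K) (MvPolynomial (Fin 2) K)) ∈ L) :
    ∀ D ∈ L, ∃ (α : K) (q : Polynomial K),
      D = (C α : MvPolynomial (Fin 2) K) • pderiv 0 +
        (Polynomial.aeval (X 0 : MvPolynomial (Fin 2) K) q) • pderiv 1 := by
  exact lnd_subalgebra_triangular' L hL hx hy hxy
end
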